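/- arXiv:2204.07273 — 6 statements merged into one kernel-verified Lean document; each statement's English description precedes it below -/
import Mathlib

section
/- Let p be a prime, let χ be a nontrivial Dirichlet character modulo p, and let x, y be integers with p ∤ x·y. Then Σ_{a (mod p), p ∤ a} conj(χ)(a) · S(x·ā, y; p) = conj(χ)(x·y) · τ(χ)², where ā denotes the multiplicative inverse of a modulo p. -/
open Finset

/-- `eR x = exp(2πi·x)`. -/
noncomputable def eR (x : ℝ) : ℂ := Complex.exp (2 * Real.pi * Complex.I * x)

/-- `eZMod c x = e(x/c)` for a residue `x` mod `c`. -/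
noncomputable def eZMod (c : ℕ) (x : ZMod c) : ℂ := eR ((x.val : ℝ) / c)

/-- Kloosterman sum `S(a, b; c)`. -/
noncomputable def kloos (a b : ℤ) (c : ℕ) : ℂ :=
  ∑ d ∈ (Finset.range c).filter (fun d => Nat.Coprime d c),
    eZMod c ((a : ZMod c) * (d : ZMod c) + (b : ZMod c) * ((d : ZMod c))⁻¹)

/-- Normalized Kloosterman sum `Kl2(n; p)`. -/
noncomputable def Kl2 (p : ℕ) (n : ZMod p) : ℂ :=
  ((1 / Real.sqrt p : ℝ) : ℂ) *
    ∑ x1 ∈ Finset.range p, ∑ x2 ∈ Finset.range p,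
      if (x1 : ZMod p) * (x2 : ZMod p) = n then eR (((x1 : ℝ) + (x2 : ℝ)) / p) else 0

/-- Gauss sum `τ(χ)` of a Dirichlet character mod `q`. -/
noncomputable def gauss (q : ℕ) (χ : DirichletCharacter ℂ q) : ℂ :=
  ∑ a ∈ Finset.range q, χ (a : ZMod q) * eZMod q (a : ZMod q)

/-- The sum `L_{α,β}(v; p)` attached to a Dirichlet character mod `p`. -/
noncomputable def Lab (p : ℕ) (χ : DirichletCharacter ℂ p) (α β v : ZMod p) : ℂ :=
  ((1 / Real.sqrt p : ℝ) : ℂ) *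
    ∑ b ∈ Finset.range p,
      if Nat.Coprime (((b : ZMod p) + β * v).val) p
      then (starRingEnd ℂ) (χ (b : ZMod p)) * eZMod p (α * ((b : ZMod p) + β * v)⁻¹)
      else 0

/-- The character sum `𝔅(n1, n2, m; q)` (with parameters `r, M1, M2`). -/
noncomputable def frakB (r M1 M2 n1 : ℕ) (n2 m : ℤ) (q : ℕ) : ℂ :=
  ∑ d ∈ q.divisors, (d : ℂ) * ((ArithmeticFunction.moebius (q / d) : ℤ) : ℂ) *
    ∑ u ∈ (Finset.range (q * r / n1)).filter (fun u => Nat.Coprime u (q * r / n1)),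
      if (m : ZMod d) = ((M2 ^ 2 * n1 * u : ℕ) : ZMod d)
      then eZMod (q * r / n1)
        ((n2 : ZMod (q * r / n1)) * ((M1 : ZMod (q * r / n1)) * (u : ZMod (q * r / n1)))⁻¹)
      else 0

/-- The character sum `𝔇(n1, n2, m, q; M1)` (with parameters `r, M2, χ1`). -/
noncomputable def frakD (M1 M2 q r n1 : ℕ) (χ1 : DirichletCharacter ℂ M1) (n2 m : ℤ) : ℂ :=
  ∑ a ∈ (Finset.range M1).filter (fun a => Nat.Coprime a M1),
    Lab M1 χ1 ((m : ZMod M1) * ((q : ZMod M1) * (M2 : ZMod M1))⁻¹) (M2 : ZMod M1) (a : ZMod M1) *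
    Kl2 M1 (-(r : ZMod M1) * (n2 : ZMod M1) *
      ((a : ZMod M1) * (((q * r / n1 : ℕ)) : ZMod M1) ^ 2)⁻¹)

set_option linter.unusedVariables false

lemma eZMod_pow_repr (c : ℕ) (z : ZMod c) :
    eZMod c z = Complex.exp (2 * Real.pi * Complex.I / c) ^ z.val := by
  rw [← Complex.exp_nat_mul]
  unfold eZMod eR
  rcases eq_or_ne c 0 with rfl | hc
  · simp
  · congr 1
    have : (c : ℂ) ≠ 0 := Nat.cast_ne_zero.2 hc
    push_cast
    field_simp

lemma eZMod_add (c : ℕ) [NeZero c] (a b : ZMod c) :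
    eZMod c (a + b) = eZMod c a * eZMod c b := by
  have hc : (c : ℂ) ≠ 0 := Nat.cast_ne_zero.2 (NeZero.ne c)
  set ζ := Complex.exp (2 * Real.pi * Complex.I / c) with hζ
  have hroot : ζ ^ c = 1 := by
    rw [hζ, ← Complex.exp_nat_mul, mul_div_cancel₀ _ hc, Complex.exp_two_pi_mul_I]
  have hmod : ∀ m : ℕ, ζ ^ (m % c) = ζ ^ m := by
    intro m
    conv_rhs => rw [← Nat.div_add_mod m c]
    rw [pow_add, pow_mul, hroot, one_pow, one_mul]
  rw [eZMod_pow_repr, eZMod_pow_repr, eZMod_pow_repr, ← pow_add, ZMod.val_add, hmod]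

lemma sum_units_eq {p : ℕ} [NeZero p] (f : ZMod p → ℂ) :
    ∑ d ∈ (Finset.range p).filter (fun d => Nat.Coprime d p), f (d : ZMod p)
      = ∑ u : (ZMod p)ˣ, f (u : ZMod p) := by
  exact Finset.sum_bij'
    (fun n hn => ZMod.unitOfCoprime n (Finset.mem_filter.1 hn).2)
    (fun u _ => ((u : ZMod p)).val)
    (fun n hn => Finset.mem_univ _)
    (fun u _ => by
      simp only [Finset.mem_filter, Finset.mem_range]
      exact ⟨ZMod.val_lt _, ZMod.val_coe_unit_coprime u⟩)
    (fun n hn => by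
      simpa [ZMod.coe_unitOfCoprime] using
        ZMod.val_cast_of_lt (Finset.mem_range.1 (Finset.mem_filter.1 hn).1))
    (fun u _ => by
      ext
      simp [ZMod.coe_unitOfCoprime, ZMod.natCast_val, ZMod.cast_id])
    (fun n hn => by rw [ZMod.coe_unitOfCoprime])

lemma conj_chi {p : ℕ} (hp : p.Prime) (χ : DirichletCharacter ℂ p) (u : (ZMod p)ˣ) :
    (starRingEnd ℂ) (χ (u : ZMod p)) = χ ((u⁻¹ : (ZMod p)ˣ) : ZMod p) := by
  haveI : Fact p.Prime := ⟨hp⟩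
  have h1 : χ ((u⁻¹ : (ZMod p)ˣ) : ZMod p) * χ (u : ZMod p) = 1 := by
    rw [← map_mul, ← Units.val_mul, inv_mul_cancel, Units.val_one, map_one]
  have hpow : χ (u : ZMod p) ^ (p - 1) = 1 := by
    rw [← map_pow, ZMod.pow_card_sub_one_eq_one u.ne_zero, map_one]
  have hnorm : ‖χ (u : ZMod p)‖ = 1 :=
    Complex.norm_eq_one_of_pow_eq_one hpow (Nat.sub_ne_zero_of_lt hp.one_lt)
  have h2 : (starRingEnd ℂ) (χ (u : ZMod p)) * χ (u : ZMod p) = 1 := by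
    rw [mul_comm, Complex.mul_conj]
    norm_cast
    rw [Complex.normSq_eq_norm_sq, hnorm]
    norm_num
  have hne : χ (u : ZMod p) ≠ 0 := by
    intro h
    rw [h, mul_zero] at h1
    exact one_ne_zero h1.symm
  exact mul_right_cancel₀ hne (h2.trans h1.symm)


/-- twisted average of Kloosterman sums equals `conj(χ)(x·y)·τ(χ)²`. -/
theorem kloosterman_twisted_average
    (p : ℕ) (hp : p.Prime) (χ : DirichletCharacter ℂ p) (hχ : χ ≠ 1)
    (x y : ℤ) (hxy : ¬ ((p : ℤ) ∣ x * y)) :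
    ∑ a ∈ (Finset.range p).filter (fun a => Nat.Coprime a p),
      (starRingEnd ℂ) (χ (a : ZMod p)) *
        kloos (x * (ZMod.val ((a : ZMod p))⁻¹ : ℤ)) y p
    = (starRingEnd ℂ) (χ ((x * y : ℤ) : ZMod p)) * gauss p χ ^ 2 := by
  haveI : Fact p.Prime := ⟨hp⟩
  set X : ZMod p := ((x : ℤ) : ZMod p) with hX
  set Y : ZMod p := ((y : ℤ) : ZMod p) with hY
  have hXY : X * Y ≠ 0 := by
    rw [hX, hY, ← Int.cast_mul, Ne, ZMod.intCast_zmod_eq_zero_iff_dvd]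
    exact hxy
  have hX0 : X ≠ 0 := fun h => hXY (by rw [h, zero_mul])
  have hY0 : Y ≠ 0 := fun h => hXY (by rw [h, mul_zero])
  obtain ⟨xu, hxu⟩ : ∃ u : (ZMod p)ˣ, (u : ZMod p) = X := ⟨(Ne.isUnit hX0).unit, rfl⟩
  obtain ⟨yu, hyu⟩ : ∃ u : (ZMod p)ˣ, (u : ZMod p) = Y := ⟨(Ne.isUnit hY0).unit, rfl⟩
  have hcast : ∀ z : ZMod p, ((x * (ZMod.val z⁻¹ : ℤ) : ℤ) : ZMod p) = X * z⁻¹ := by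
    intro z
    push_cast
    rw [ZMod.natCast_val, ZMod.cast_id]
  -- rewrite gauss as a sum over units
  have gauss_eq : gauss p χ = ∑ u : (ZMod p)ˣ, χ (u : ZMod p) * eZMod p (u : ZMod p) := by
    unfold gauss
    rw [← Finset.sum_subset
      (Finset.filter_subset (fun a => Nat.Coprime a p) (Finset.range p))
      (fun n hn hnf => ?_)]
    · exact sum_units_eq (fun z => χ z * eZMod p z)
    · have hcop : ¬ Nat.Coprime n p := fun hc =>
        hnf (Finset.mem_filter.2 ⟨hn, hc⟩)
      rw [MulChar.map_nonunit χ (fun hu => hcop ((ZMod.isUnit_iff_coprime n p).1 hu)),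
        zero_mul]
  -- rewrite LHS as a double sum over units
  have lhs_eq : ∑ a ∈ (Finset.range p).filter (fun a => Nat.Coprime a p),
      (starRingEnd ℂ) (χ (a : ZMod p)) * kloos (x * (ZMod.val ((a : ZMod p))⁻¹ : ℤ)) y p
      = ∑ a : (ZMod p)ˣ, ∑ d : (ZMod p)ˣ,
          (starRingEnd ℂ) (χ (a : ZMod p)) *
            eZMod p (X * ((a⁻¹ : (ZMod p)ˣ) : ZMod p) * (d : ZMod p)
              + Y * ((d⁻¹ : (ZMod p)ˣ) : ZMod p)) := by
    rw [sum_units_eq (fun z => (starRingEnd ℂ) (χ z) *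
      kloos (x * (ZMod.val z⁻¹ : ℤ)) y p)]
    refine Fintype.sum_congr _ _ (fun a => ?_)
    unfold kloos
    rw [sum_units_eq (fun z => eZMod p (((x * (ZMod.val ((a : ZMod p))⁻¹ : ℤ) : ℤ) : ZMod p) * z
      + ((y : ℤ) : ZMod p) * z⁻¹)), Finset.mul_sum]
    refine Fintype.sum_congr _ _ (fun d => ?_)
    rw [hcast, ZMod.inv_coe_unit, ZMod.inv_coe_unit, ← hY]
  rw [lhs_eq, gauss_eq]
  -- the reindexing bijection on pairs of units
  let e : ((ZMod p)ˣ × (ZMod p)ˣ) ≃ ((ZMod p)ˣ × (ZMod p)ˣ) :=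
    { toFun := fun z => (xu * z.1⁻¹ * z.2, yu * z.2⁻¹)
      invFun := fun z => (xu * yu * z.2⁻¹ * z.1⁻¹, yu * z.2⁻¹)
      left_inv := by
        rintro ⟨a, d⟩
        refine Prod.ext (Units.ext ?_) (Units.ext ?_) <;>
          · simp only [Units.val_mul, Units.val_inv_eq_inv_val]
            field_simp
            try ring
      right_inv := by
        rintro ⟨s, t⟩
        refine Prod.ext (Units.ext ?_) (Units.ext ?_) <;>
          · simp only [Units.val_mul, Units.val_inv_eq_inv_val]
            field_simp
            try ring }
  -- termwise identity
  have term_eq : ∀ z : (ZMod p)ˣ × (ZMod p)ˣ,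
      (starRingEnd ℂ) (χ (z.1 : ZMod p)) *
        eZMod p (X * ((z.1⁻¹ : (ZMod p)ˣ) : ZMod p) * (z.2 : ZMod p)
          + Y * ((z.2⁻¹ : (ZMod p)ˣ) : ZMod p))
      = (starRingEnd ℂ) (χ (X * Y)) *
          (χ ((e z).1 : ZMod p) * eZMod p ((e z).1 : ZMod p)) *
          (χ ((e z).2 : ZMod p) * eZMod p ((e z).2 : ZMod p)) := by
    rintro ⟨a, d⟩
    have hs : (((xu * a⁻¹ * d : (ZMod p)ˣ)) : ZMod p)
        = X * ((a⁻¹ : (ZMod p)ˣ) : ZMod p) * (d : ZMod p) := by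
      rw [Units.val_mul, Units.val_mul, hxu]
    have ht : (((yu * d⁻¹ : (ZMod p)ˣ)) : ZMod p)
        = Y * ((d⁻¹ : (ZMod p)ˣ) : ZMod p) := by
      rw [Units.val_mul, hyu]
    have hXYu : X * Y = ((xu * yu : (ZMod p)ˣ) : ZMod p) := by
      rw [Units.val_mul, hxu, hyu]
    have hchar : (starRingEnd ℂ) (χ (X * Y)) *
        χ (((xu * a⁻¹ * d : (ZMod p)ˣ)) : ZMod p) *
        χ (((yu * d⁻¹ : (ZMod p)ˣ)) : ZMod p)
        = (starRingEnd ℂ) (χ (a : ZMod p)) := by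
      rw [hXYu, conj_chi hp χ (xu * yu), conj_chi hp χ a, ← map_mul, ← map_mul]
      congr 1
      simp only [Units.val_mul, Units.val_inv_eq_inv_val]
      field_simp
    show (starRingEnd ℂ) (χ (a : ZMod p)) *
        eZMod p (X * ((a⁻¹ : (ZMod p)ˣ) : ZMod p) * (d : ZMod p)
          + Y * ((d⁻¹ : (ZMod p)ˣ) : ZMod p))
      = (starRingEnd ℂ) (χ (X * Y)) *
          (χ (((xu * a⁻¹ * d : (ZMod p)ˣ)) : ZMod p) *
            eZMod p (((xu * a⁻¹ * d : (ZMod p)ˣ)) : ZMod p)) *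
          (χ (((yu * d⁻¹ : (ZMod p)ˣ)) : ZMod p) *
            eZMod p (((yu * d⁻¹ : (ZMod p)ˣ)) : ZMod p))
    calc (starRingEnd ℂ) (χ (a : ZMod p)) *
          eZMod p (X * ((a⁻¹ : (ZMod p)ˣ) : ZMod p) * (d : ZMod p)
            + Y * ((d⁻¹ : (ZMod p)ˣ) : ZMod p))
        = (starRingEnd ℂ) (χ (a : ZMod p)) *
            eZMod p ((((xu * a⁻¹ * d : (ZMod p)ˣ)) : ZMod p)
              + (((yu * d⁻¹ : (ZMod p)ˣ)) : ZMod p)) := by rw [hs, ht]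
      _ = ((starRingEnd ℂ) (χ (X * Y)) *
            χ (((xu * a⁻¹ * d : (ZMod p)ˣ)) : ZMod p) *
            χ (((yu * d⁻¹ : (ZMod p)ˣ)) : ZMod p)) *
            (eZMod p (((xu * a⁻¹ * d : (ZMod p)ˣ)) : ZMod p) *
             eZMod p (((yu * d⁻¹ : (ZMod p)ˣ)) : ZMod p)) := by
          rw [hchar, eZMod_add]
      _ = _ := by ring
  -- put everything together
  have conj_arg : (starRingEnd ℂ) (χ ((x * y : ℤ) : ZMod p))
      = (starRingEnd ℂ) (χ (X * Y)) := by rw [hX, hY]; push_cast; rfl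
  rw [conj_arg, sq]
  calc ∑ a : (ZMod p)ˣ, ∑ d : (ZMod p)ˣ,
        (starRingEnd ℂ) (χ (a : ZMod p)) *
          eZMod p (X * ((a⁻¹ : (ZMod p)ˣ) : ZMod p) * (d : ZMod p)
            + Y * ((d⁻¹ : (ZMod p)ˣ) : ZMod p))
      = ∑ a : (ZMod p)ˣ, ∑ d : (ZMod p)ˣ,
          (starRingEnd ℂ) (χ (X * Y)) *
            (χ ((e (a, d)).1 : ZMod p) * eZMod p ((e (a, d)).1 : ZMod p)) *
            (χ ((e (a, d)).2 : ZMod p) * eZMod p ((e (a, d)).2 : ZMod p)) :=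
        Fintype.sum_congr _ _ (fun a => Fintype.sum_congr _ _ (fun d => term_eq (a, d)))
    _ = ∑ z : (ZMod p)ˣ × (ZMod p)ˣ,
          (starRingEnd ℂ) (χ (X * Y)) *
            (χ ((e z).1 : ZMod p) * eZMod p ((e z).1 : ZMod p)) *
            (χ ((e z).2 : ZMod p) * eZMod p ((e z).2 : ZMod p)) :=
        (Fintype.sum_prod_type (f := fun z => (starRingEnd ℂ) (χ (X * Y)) *
            (χ ((e z).1 : ZMod p) * eZMod p ((e z).1 : ZMod p)) *
            (χ ((e z).2 : ZMod p) * eZMod p ((e z).2 : ZMod p)))).symm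
    _ = ∑ z : (ZMod p)ˣ × (ZMod p)ˣ,
          (starRingEnd ℂ) (χ (X * Y)) *
            (χ (z.1 : ZMod p) * eZMod p (z.1 : ZMod p)) *
            (χ (z.2 : ZMod p) * eZMod p (z.2 : ZMod p)) :=
        Equiv.sum_comp e (fun z => (starRingEnd ℂ) (χ (X * Y)) *
            (χ (z.1 : ZMod p) * eZMod p (z.1 : ZMod p)) *
            (χ (z.2 : ZMod p) * eZMod p (z.2 : ZMod p)))
    _ = (starRingEnd ℂ) (χ (X * Y)) *
          ((∑ u : (ZMod p)ˣ, χ (u : ZMod p) * eZMod p (u : ZMod p)) *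
           (∑ u : (ZMod p)ˣ, χ (u : ZMod p) * eZMod p (u : ZMod p))) := by
        rw [Fintype.sum_prod_type (f := fun z : (ZMod p)ˣ × (ZMod p)ˣ =>
            (starRingEnd ℂ) (χ (X * Y)) *
            (χ (z.1 : ZMod p) * eZMod p (z.1 : ZMod p)) *
            (χ (z.2 : ZMod p) * eZMod p (z.2 : ZMod p)))]
        rw [Finset.sum_mul_sum, Finset.mul_sum]
        refine Fintype.sum_congr _ _ (fun a => ?_)
        rw [Finset.mul_sum]
        refine Fintype.sum_congr _ _ (fun d => ?_)
        ring
end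

section
/- Let M1 and M2 be distinct primes and let q1, q2, q2', r be positive integers with gcd(q2, q1·M1·M2) = 1, gcd(q2', q1·M1·M2) = 1, gcd(q1·r, M1·M2) = 1, and gcd(q2·q2', n1·r) = 1, where n1 is a positive integer dividing q1·r. Let m, m' be integers and let ε, δ ∈ {+1, −1}. Define 𝒞2(0) = (n1/(q2·q2'·q1·r)) · Σ_{v (mod q2·q2'·q1·r/n1)} 𝔅(n1, ε·v, δ·m; q1·q2) · conj(𝔅(n1, ε·v, δ·m'; q1·q2')). If q2 ≠ q2', then 𝒞2(0) = 0. -/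
open Finset

/-- the zero-frequency sum `𝒞2(0)` vanishes unless `q2 = q2'`. -/
lemma eZMod_intCast (c : ℕ) [NeZero c] (k : ℤ) :
    eZMod c ((k : ZMod c)) = Complex.exp (2 * Real.pi * Complex.I * k / c) := by
  have hc : (c : ℂ) ≠ 0 := Nat.cast_ne_zero.mpr (NeZero.ne c)
  have hval : (((k : ZMod c).val : ℤ)) = k % c := ZMod.val_intCast k
  have hk : (k : ℂ) = c * ((k / c : ℤ) : ℂ) + (((k : ZMod c).val : ℤ) : ℂ) := by
    rw [hval]; exact_mod_cast (Int.mul_ediv_add_emod k c).symm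
  rw [eZMod, eR]
  rw [show (2 * (Real.pi : ℂ) * Complex.I * k / c)
      = 2 * Real.pi * Complex.I * ((((k : ZMod c).val : ℤ) : ℂ)) / c
        + ((k / c : ℤ) : ℂ) * (2 * Real.pi * Complex.I) from by
    rw [hk]; field_simp; ring]
  rw [Complex.exp_add, Complex.exp_int_mul_two_pi_mul_I, mul_one]
  congr 1
  push_cast
  ring

lemma inner_vanish (N1 N2 L : ℕ) (hN1 : 0 < N1) (hN2 : 0 < N2) (hNe : N1 ≠ N2)
    (hd1 : N1 ∣ L) (hd2 : N2 ∣ L) (a : ZMod N1) (b : ZMod N2)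
    (ha : IsUnit a) (hb : IsUnit b) (ε : ℤ) (hε : ε = 1 ∨ ε = -1) :
    ∑ v ∈ Finset.range L,
      eZMod N1 (((ε * (v : ℕ) : ℤ) : ZMod N1) * a) *
        (starRingEnd ℂ) (eZMod N2 (((ε * (v : ℕ) : ℤ) : ZMod N2) * b)) = 0 := by
  haveI : NeZero N1 := ⟨hN1.ne'⟩
  haveI : NeZero N2 := ⟨hN2.ne'⟩
  have hN1c : (N1 : ℂ) ≠ 0 := Nat.cast_ne_zero.mpr hN1.ne'
  have hN2c : (N2 : ℂ) ≠ 0 := Nat.cast_ne_zero.mpr hN2.ne'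
  have hpi : (2 : ℂ) * Real.pi * Complex.I ≠ 0 := by
    simp [Real.pi_ne_zero, Complex.I_ne_zero, Complex.ofReal_ne_zero]
  set A : ℕ := a.val with hA
  set B : ℕ := b.val with hB
  have hAcop : Nat.Coprime A N1 := by
    obtain ⟨ua, rfl⟩ := ha; exact ZMod.val_coe_unit_coprime ua
  have hBcop : Nat.Coprime B N2 := by
    obtain ⟨ub, rfl⟩ := hb; exact ZMod.val_coe_unit_coprime ub
  set ζ : ℂ := 2 * Real.pi * Complex.I * (ε * ((A : ℂ) * N2 - (B : ℂ) * N1)) / (N1 * N2)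
    with hζ
  have ha' : ((A : ℕ) : ZMod N1) = a := ZMod.natCast_rightInverse a
  have hb' : ((B : ℕ) : ZMod N2) = b := ZMod.natCast_rightInverse b
  have hterm : ∀ v : ℕ,
      eZMod N1 (((ε * (v : ℕ) : ℤ) : ZMod N1) * a) *
        (starRingEnd ℂ) (eZMod N2 (((ε * (v : ℕ) : ℤ) : ZMod N2) * b))
      = Complex.exp ζ ^ v := by
    intro v
    have e1 : (((ε * (v : ℕ) : ℤ) : ZMod N1) * a) = ((ε * v * A : ℤ) : ZMod N1) := by
      rw [← ha']; push_cast; ring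
    have e2 : (((ε * (v : ℕ) : ℤ) : ZMod N2) * b) = ((ε * v * B : ℤ) : ZMod N2) := by
      rw [← hb']; push_cast; ring
    rw [e1, e2, eZMod_intCast, eZMod_intCast, ← Complex.exp_conj]
    rw [← Complex.exp_add, ← Complex.exp_nat_mul]
    congr 1
    have : (starRingEnd ℂ) (2 * Real.pi * Complex.I * ((ε * v * B : ℤ) : ℂ) / N2)
        = -(2 * Real.pi * Complex.I * ((ε * v * B : ℤ) : ℂ) / N2) := by
      simp [map_div₀, map_mul, Complex.conj_I, Complex.conj_ofReal, map_intCast,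
        map_natCast, map_ofNat]
      ring
    rw [this, hζ]
    push_cast
    field_simp
    ring
  simp only [hterm]
  have hwne : Complex.exp ζ ≠ 1 := by
    intro hw
    rw [Complex.exp_eq_one_iff] at hw
    obtain ⟨n, hn⟩ := hw
    rw [hζ] at hn
    have hcross : (ε : ℂ) * ((A : ℂ) * N2 - (B : ℂ) * N1) = n * (N1 * N2) := by
      field_simp at hn
      apply mul_left_cancel₀ hpi
      linear_combination (2 * (Real.pi : ℂ) * Complex.I) * hn
    have hint : ε * ((A : ℤ) * N2 - (B : ℤ) * N1) = n * (N1 * N2) := by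
      exact_mod_cast hcross
    have hdvd : ((N1 : ℤ) * N2) ∣ ((A : ℤ) * N2 - (B : ℤ) * N1) := by
      rcases hε with rfl | rfl
      · exact ⟨n, by linarith⟩
      · exact ⟨-n, by push_cast at hint ⊢; linarith⟩
    have hd1' : (N1 : ℤ) ∣ (A : ℤ) * N2 := by
      have h1 : (N1 : ℤ) ∣ ((A : ℤ) * N2 - (B : ℤ) * N1) :=
        dvd_trans ⟨N2, rfl⟩ hdvd
      have h2 : (N1 : ℤ) ∣ (B : ℤ) * N1 := ⟨B, mul_comm _ _⟩
      simpa using dvd_add h1 h2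
    have hd2' : (N2 : ℤ) ∣ (B : ℤ) * N1 := by
      have h1 : (N2 : ℤ) ∣ ((A : ℤ) * N2 - (B : ℤ) * N1) :=
        dvd_trans ⟨N1, mul_comm _ _⟩ hdvd
      have h2 : (N2 : ℤ) ∣ (A : ℤ) * N2 := ⟨A, mul_comm _ _⟩
      have := dvd_sub h2 h1
      simpa using this
    have hnd1 : N1 ∣ A * N2 := Int.natCast_dvd_natCast.mp (by push_cast; exact hd1')
    have hnd2 : N2 ∣ B * N1 := Int.natCast_dvd_natCast.mp (by push_cast; exact hd2')
    have h12 : N1 ∣ N2 := Nat.Coprime.dvd_of_dvd_mul_left hAcop.symm hnd1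
    have h21 : N2 ∣ N1 := Nat.Coprime.dvd_of_dvd_mul_left hBcop.symm hnd2
    exact hNe (Nat.dvd_antisymm h12 h21)
  rw [geom_sum_eq hwne]
  obtain ⟨c1, hc1⟩ := hd1
  obtain ⟨c2, hc2⟩ := hd2
  have hL1 : (L : ℂ) = N1 * c1 := by exact_mod_cast congrArg (Nat.cast : ℕ → ℂ) hc1
  have hL2 : (L : ℂ) = N2 * c2 := by exact_mod_cast congrArg (Nat.cast : ℕ → ℂ) hc2
  have hwL : Complex.exp ζ ^ L = 1 := by
    rw [← Complex.exp_nat_mul]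
    have hexp : (L : ℂ) * ζ = ((ε * ((c1 : ℤ) * A - (c2 : ℤ) * B)) : ℤ) * (2 * Real.pi * Complex.I) := by
      rw [hζ]
      push_cast
      field_simp
      linear_combination ((ε : ℂ) * A * N2) * hL1
        - ((ε : ℂ) * B * N1) * hL2
    rw [hexp, Complex.exp_int_mul_two_pi_mul_I]
  rw [hwL, sub_self, zero_div]

theorem zero_frequency_vanishes
    (M1 M2 : ℕ) (hM1 : M1.Prime) (hM2 : M2.Prime) (hMM : M1 ≠ M2)
    (q1 q2 q2' r n1 : ℕ) (hq1 : 0 < q1) (hq2 : 0 < q2) (hq2' : 0 < q2')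
    (hr : 0 < r) (hn1 : 0 < n1)
    (h1 : Nat.Coprime q2 (q1 * M1 * M2)) (h2 : Nat.Coprime q2' (q1 * M1 * M2))
    (h3 : Nat.Coprime (q1 * r) (M1 * M2)) (hn1dvd : n1 ∣ q1 * r)
    (h4 : Nat.Coprime (q2 * q2') (n1 * r))
    (m m' ε δ : ℤ) (hε : ε = 1 ∨ ε = -1) (hδ : δ = 1 ∨ δ = -1)
    (hne : q2 ≠ q2') :
    ((n1 : ℂ) / ((q2 : ℂ) * q2' * q1 * r)) *
      ∑ v ∈ Finset.range (q2 * q2' * q1 * r / n1),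
        frakB r M1 M2 n1 (ε * v) (δ * m) (q1 * q2) *
          (starRingEnd ℂ) (frakB r M1 M2 n1 (ε * v) (δ * m') (q1 * q2'))
    = 0 := by
  apply mul_eq_zero_of_right
  have hKpos : 0 < q1 * r / n1 := Nat.div_pos (Nat.le_of_dvd (by positivity) hn1dvd) hn1
  have hN1eq : q1 * q2 * r / n1 = q2 * (q1 * r / n1) := by
    rw [show q1 * q2 * r = q2 * (q1 * r) from by ring, Nat.mul_div_assoc q2 hn1dvd]
  have hN2eq : q1 * q2' * r / n1 = q2' * (q1 * r / n1) := by
    rw [show q1 * q2' * r = q2' * (q1 * r) from by ring, Nat.mul_div_assoc q2' hn1dvd]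
  have hLeq : q2 * q2' * q1 * r / n1 = q2 * q2' * (q1 * r / n1) := by
    rw [show q2 * q2' * q1 * r = q2 * q2' * (q1 * r) from by ring,
      Nat.mul_div_assoc (q2 * q2') hn1dvd]
  have hN1pos : 0 < q1 * q2 * r / n1 := by rw [hN1eq]; positivity
  have hN2pos : 0 < q1 * q2' * r / n1 := by rw [hN2eq]; positivity
  have hNe : q1 * q2 * r / n1 ≠ q1 * q2' * r / n1 := by
    rw [hN1eq, hN2eq]
    exact fun h => hne (Nat.eq_of_mul_eq_mul_right hKpos h)
  have hdd1 : q1 * q2 * r / n1 ∣ q2 * q2' * q1 * r / n1 := by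
    rw [hN1eq, hLeq]; exact ⟨q2', by ring⟩
  have hdd2 : q1 * q2' * r / n1 ∣ q2 * q2' * q1 * r / n1 := by
    rw [hN2eq, hLeq]; exact ⟨q2, by ring⟩
  haveI : NeZero (q1 * q2 * r / n1) := ⟨hN1pos.ne'⟩
  haveI : NeZero (q1 * q2' * r / n1) := ⟨hN2pos.ne'⟩
  have hM1K : Nat.Coprime (q1 * r / n1) M1 :=
    Nat.Coprime.coprime_dvd_left (Nat.div_dvd_of_dvd hn1dvd)
      (Nat.Coprime.coprime_dvd_right (dvd_mul_right M1 M2) h3)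
  have hM1N1 : Nat.Coprime M1 (q1 * q2 * r / n1) := by
    rw [hN1eq]
    exact Nat.Coprime.mul_right
      (Nat.Coprime.coprime_dvd_right ⟨q1 * M2, by ring⟩ h1).symm hM1K.symm
  have hM1N2 : Nat.Coprime M1 (q1 * q2' * r / n1) := by
    rw [hN2eq]
    exact Nat.Coprime.mul_right
      (Nat.Coprime.coprime_dvd_right ⟨q1 * M2, by ring⟩ h2).symm hM1K.symm
  simp only [frakB, map_sum, map_mul, map_intCast, map_natCast, apply_ite, map_zero,
    mul_ite, ite_mul, mul_zero, zero_mul, Finset.mul_sum, Finset.sum_mul]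
  rw [Finset.sum_comm]
  refine Finset.sum_eq_zero fun d' _ => ?_
  rw [Finset.sum_comm]
  refine Finset.sum_eq_zero fun u' hu' => ?_
  by_cases hQ : ((δ * m' : ℤ) : ZMod d') = ((M2 ^ 2 * n1 * u' : ℕ) : ZMod d')
  swap
  · simp only [if_neg hQ, Finset.sum_const_zero]
  simp only [if_pos hQ]
  rw [Finset.sum_comm]
  refine Finset.sum_eq_zero fun d _ => ?_
  rw [Finset.sum_comm]
  refine Finset.sum_eq_zero fun u hu => ?_
  by_cases hP : ((δ * m : ℤ) : ZMod d) = ((M2 ^ 2 * n1 * u : ℕ) : ZMod d)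
  swap
  · simp only [if_neg hP, Finset.sum_const_zero]
  simp only [if_pos hP]
  have hucop : Nat.Coprime u (q1 * q2 * r / n1) := (Finset.mem_filter.mp hu).2
  have hucop' : Nat.Coprime u' (q1 * q2' * r / n1) := (Finset.mem_filter.mp hu').2
  have hua : IsUnit ((M1 : ZMod (q1 * q2 * r / n1)) * (u : ZMod (q1 * q2 * r / n1))) :=
    ((ZMod.isUnit_iff_coprime M1 _).mpr hM1N1).mul ((ZMod.isUnit_iff_coprime u _).mpr hucop)
  have hub : IsUnit ((M1 : ZMod (q1 * q2' * r / n1)) * (u' : ZMod (q1 * q2' * r / n1))) :=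
    ((ZMod.isUnit_iff_coprime M1 _).mpr hM1N2).mul ((ZMod.isUnit_iff_coprime u' _).mpr hucop')
  have ha : IsUnit ((M1 : ZMod (q1 * q2 * r / n1)) * (u : ZMod (q1 * q2 * r / n1)))⁻¹ :=
    IsUnit.of_mul_eq_one _ (ZMod.inv_mul_of_unit _ hua)
  have hb : IsUnit ((M1 : ZMod (q1 * q2' * r / n1)) * (u' : ZMod (q1 * q2' * r / n1)))⁻¹ :=
    IsUnit.of_mul_eq_one _ (ZMod.inv_mul_of_unit _ hub)
  have h0 := inner_vanish (q1 * q2 * r / n1) (q1 * q2' * r / n1) (q2 * q2' * q1 * r / n1)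
    hN1pos hN2pos hNe hdd1 hdd2 _ _ ha hb ε hε
  calc
    ∑ v ∈ Finset.range (q2 * q2' * q1 * r / n1),
        (d : ℂ) * ((ArithmeticFunction.moebius (q1 * q2 / d) : ℤ) : ℂ) *
            eZMod (q1 * q2 * r / n1) (((ε * v : ℤ) : ZMod (q1 * q2 * r / n1)) *
              ((M1 : ZMod (q1 * q2 * r / n1)) * (u : ZMod (q1 * q2 * r / n1)))⁻¹) *
          ((d' : ℂ) * ((ArithmeticFunction.moebius (q1 * q2' / d') : ℤ) : ℂ) *
            (starRingEnd ℂ) (eZMod (q1 * q2' * r / n1)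
              (((ε * v : ℤ) : ZMod (q1 * q2' * r / n1)) *
                ((M1 : ZMod (q1 * q2' * r / n1)) * (u' : ZMod (q1 * q2' * r / n1)))⁻¹)))
      = ((d : ℂ) * ((ArithmeticFunction.moebius (q1 * q2 / d) : ℤ) : ℂ) *
          ((d' : ℂ) * ((ArithmeticFunction.moebius (q1 * q2' / d') : ℤ) : ℂ))) *
        ∑ v ∈ Finset.range (q2 * q2' * q1 * r / n1),
          eZMod (q1 * q2 * r / n1) (((ε * v : ℤ) : ZMod (q1 * q2 * r / n1)) *
              ((M1 : ZMod (q1 * q2 * r / n1)) * (u : ZMod (q1 * q2 * r / n1)))⁻¹) *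
            (starRingEnd ℂ) (eZMod (q1 * q2' * r / n1)
              (((ε * v : ℤ) : ZMod (q1 * q2' * r / n1)) *
                ((M1 : ZMod (q1 * q2' * r / n1)) * (u' : ZMod (q1 * q2' * r / n1)))⁻¹)) := by
        rw [Finset.mul_sum]
        exact Finset.sum_congr rfl fun v _ => by ring
    _ = 0 := by rw [h0, mul_zero]
end

section
/- There is an absolute constant C > 0 with the following property. Let N ≥ 1 and R ≥ 1 be real numbers, let ε ∈ (0, 1], and let K ≥ 0. Let a : ℕ × ℕ → ℂ, b : ℕ → ℂ, and c : ℕ × ℕ → ℂ be functions such that |c(n, r)| ≤ 1 for all n, r ≥ 1 and c(n, r) = 0 unless N ≤ n·r² ≤ 2N, and such that for every real x ≥ 1 one has Σ_{n, r ≥ 1, n·r² ≤ x} |a(n, r)|² ≤ K·x^{1+ε} and Σ_{1 ≤ n ≤ x} |b(n)|² ≤ K·x^{1+ε}. Then Σ_{r ≥ R} |Σ_{n ≥ 1} a(n, r)·b(n)·c(n, r)| ≤ C·K·N^{1+ε}·R^{-1/2}. -/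
open Finset

lemma sum_inv_sq_aux (m : ℕ) (hm : 1 ≤ m) : ∀ M : ℕ, m ≤ M →
    ∑ r ∈ Finset.Icc m M, ((r : ℝ) ^ 2)⁻¹ ≤ 2 / (m : ℝ) - 1 / (M : ℝ) := by
  intro M
  induction M with
  | zero => intro h; omega
  | succ M ih =>
    intro h
    have hm1 : (1 : ℝ) ≤ (m : ℝ) := by exact_mod_cast hm
    have hmpos : (0 : ℝ) < (m : ℝ) := by linarith
    rcases eq_or_lt_of_le h with heq | hlt
    · rw [← heq, Finset.Icc_self, Finset.sum_singleton]
      have h1 : ((m : ℝ) ^ 2)⁻¹ ≤ (m : ℝ)⁻¹ := by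
        apply inv_anti₀ hmpos
        nlinarith
      have h2 : 2 / (m : ℝ) - 1 / (m : ℝ) = (m : ℝ)⁻¹ := by
        rw [div_sub_div_same]; norm_num
      linarith
    · have hmM : m ≤ M := by omega
      have hM1 : (1 : ℝ) ≤ (M : ℝ) := by
        have : 1 ≤ M := le_trans hm hmM
        exact_mod_cast this
      rw [Finset.sum_Icc_succ_top h]
      have hih := ih hmM
      have hMpos : (0 : ℝ) < (M : ℝ) := by linarith
      have hM1pos : (0 : ℝ) < (M : ℝ) + 1 := by linarith
      have e1 : 1 / (M : ℝ) - 1 / ((M : ℝ) + 1) = 1 / ((M : ℝ) * ((M : ℝ) + 1)) := by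
        field_simp
        ring
      have e2 : (((M : ℝ) + 1) ^ 2)⁻¹ ≤ 1 / ((M : ℝ) * ((M : ℝ) + 1)) := by
        rw [inv_eq_one_div]
        apply one_div_le_one_div_of_le (by positivity)
        nlinarith
      push_cast
      push_cast at hih
      linarith

lemma sum_inv_sq (m M : ℕ) (hm : 1 ≤ m) :
    ∑ r ∈ Finset.Icc m M, ((r : ℝ) ^ 2)⁻¹ ≤ 2 / (m : ℝ) := by
  by_cases h : m ≤ M
  · have := sum_inv_sq_aux m hm M h
    have hM1 : (0 : ℝ) < (M : ℝ) := by
      have : 1 ≤ M := le_trans hm h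
      exact_mod_cast Nat.lt_of_lt_of_le Nat.zero_lt_one this
    have : 1 / (M : ℝ) > 0 := by positivity
    linarith [sum_inv_sq_aux m hm M h]
  · rw [Finset.Icc_eq_empty (by omega), Finset.sum_empty]
    positivity

/-- the tail `r ≥ R` of the smoothed sum is `O(K·N^{1+ε}·R^{-1/2})`. -/
theorem large_r_tail_bound :
    ∃ C : ℝ, 0 < C ∧
      ∀ (N R ε K : ℝ) (a : ℕ × ℕ → ℂ) (b : ℕ → ℂ) (c : ℕ × ℕ → ℂ),
        1 ≤ N → 1 ≤ R → 0 < ε → ε ≤ 1 → 0 ≤ K →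
        (∀ n r : ℕ, 1 ≤ n → 1 ≤ r → ‖c (n, r)‖ ≤ 1) →
        (∀ n r : ℕ, 1 ≤ n → 1 ≤ r →
          ¬ (N ≤ (n : ℝ) * (r : ℝ) ^ 2 ∧ (n : ℝ) * (r : ℝ) ^ 2 ≤ 2 * N) → c (n, r) = 0) →
        (∀ x : ℝ, 1 ≤ x →
          ∑ p ∈ (Finset.Icc 1 ⌊x⌋₊ ×ˢ Finset.Icc 1 ⌊x⌋₊).filter
              (fun p => p.1 * p.2 ^ 2 ≤ ⌊x⌋₊),
            ‖a p‖ ^ 2 ≤ K * x ^ (1 + ε)) →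
        (∀ x : ℝ, 1 ≤ x →
          ∑ n ∈ Finset.Icc 1 ⌊x⌋₊, ‖b n‖ ^ 2 ≤ K * x ^ (1 + ε)) →
        ∑ r ∈ (Finset.Icc 1 ⌊2 * N⌋₊).filter (fun r => ⌈R⌉₊ ≤ r),
          ‖∑ n ∈ Finset.Icc 1 ⌊2 * N⌋₊, a (n, r) * b n * c (n, r)‖
        ≤ C * K * N ^ (1 + ε) * R ^ (-(1 / 2) : ℝ) := by
  classical
  refine ⟨10, by norm_num, ?_⟩
  intro N R ε K a b c hN hR hε hε1 hK hc1 hc0 ha hb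
  have hN0 : (0 : ℝ) < N := lt_of_lt_of_le one_pos hN
  have hR0 : (0 : ℝ) < R := lt_of_lt_of_le one_pos hR
  set M := ⌊2 * N⌋₊ with hMdef
  set t : ℝ := R ^ (-(1 / 2) : ℝ) with htdef
  have ht0 : 0 < t := Real.rpow_pos_of_pos hR0 _
  set T : ℕ → Finset ℕ := fun r => (Finset.Icc 1 M).filter
      (fun n => N ≤ (n : ℝ) * (r : ℝ) ^ 2 ∧ (n : ℝ) * (r : ℝ) ^ 2 ≤ 2 * N) with hTdef
  set F := (Finset.Icc 1 M).filter (fun r => ⌈R⌉₊ ≤ r) with hFdef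
  have h2N1 : (1 : ℝ) ≤ 2 * N := by linarith
  have h2Npow : (2 * N) ^ (1 + ε) ≤ 4 * N ^ (1 + ε) := by
    rw [Real.mul_rpow (by norm_num) (le_of_lt hN0)]
    have h2 : (2 : ℝ) ^ (1 + ε) ≤ (2 : ℝ) ^ (2 : ℝ) :=
      Real.rpow_le_rpow_of_exponent_le (by norm_num) (by linarith)
    have h4 : (2 : ℝ) ^ (2 : ℝ) = 4 := by
      rw [show (2 : ℝ) = ((2 : ℕ) : ℝ) by norm_num, Real.rpow_natCast]
      norm_num
    have hNpow : (0 : ℝ) ≤ N ^ (1 + ε) := Real.rpow_nonneg hN0.le _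
    nlinarith
  -- Step 1: per r, the inner sum is bounded by a sum over T r of |a|·|b|
  have step1 : ∀ r ∈ F,
      ‖∑ n ∈ Finset.Icc 1 M, a (n, r) * b n * c (n, r)‖ ≤
        ∑ n ∈ T r, ‖a (n, r)‖ * ‖b n‖ := by
    intro r hr
    obtain ⟨hrIcc, _⟩ := Finset.mem_filter.mp hr
    have hr1 : 1 ≤ r := (Finset.mem_Icc.mp hrIcc).1
    have heq : ∑ n ∈ T r, a (n, r) * b n * c (n, r)
        = ∑ n ∈ Finset.Icc 1 M, a (n, r) * b n * c (n, r) := by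
      rw [hTdef]
      apply Finset.sum_filter_of_ne
      intro n hn hne
      have hn1 : 1 ≤ n := (Finset.mem_Icc.mp hn).1
      by_contra hcond
      exact hne (by rw [hc0 n r hn1 hr1 hcond]; ring)
    rw [← heq]
    calc ‖∑ n ∈ T r, a (n, r) * b n * c (n, r)‖
        ≤ ∑ n ∈ T r, ‖a (n, r) * b n * c (n, r)‖ :=
          norm_sum_le _ _
      _ ≤ ∑ n ∈ T r, ‖a (n, r)‖ * ‖b n‖ := by
          apply Finset.sum_le_sum
          intro n hn
          have hn1 : 1 ≤ n := (Finset.mem_Icc.mp (Finset.mem_filter.mp hn).1).1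
          rw [norm_mul, norm_mul]
          have hc := hc1 n r hn1 hr1
          have h1 : (0 : ℝ) ≤ ‖a (n, r)‖ * ‖b n‖ := by positivity
          nlinarith [norm_nonneg (c (n, r))]
  -- Step 2: AM-GM with weight t
  have step2 : ∀ r, ∑ n ∈ T r, ‖a (n, r)‖ * ‖b n‖ ≤
      t / 2 * ∑ n ∈ T r, ‖a (n, r)‖ ^ 2 +
      t⁻¹ / 2 * ∑ n ∈ T r, ‖b n‖ ^ 2 := by
    intro r
    rw [Finset.mul_sum, Finset.mul_sum, ← Finset.sum_add_distrib]
    apply Finset.sum_le_sum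
    intro n _
    have htinv : t * t⁻¹ = 1 := mul_inv_cancel₀ ht0.ne'
    nlinarith [sq_nonneg (t * ‖a (n, r)‖ - ‖b n‖), ht0,
      norm_nonneg (a (n, r)), norm_nonneg (b n)]
  -- Step 3: the a-part bound
  have hA : ∑ r ∈ F, ∑ n ∈ T r, ‖a (n, r)‖ ^ 2 ≤ 4 * K * N ^ (1 + ε) := by
    have h1 : ∀ r, ∑ n ∈ T r, ‖a (n, r)‖ ^ 2 ≤
        ∑ n ∈ Finset.Icc 1 M, if n * r ^ 2 ≤ M then ‖a (n, r)‖ ^ 2 else 0 := by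
      intro r
      rw [← Finset.sum_filter]
      apply Finset.sum_le_sum_of_subset_of_nonneg
      · intro n hn
        rw [hTdef] at hn
        simp only [Finset.mem_filter] at hn ⊢
        refine ⟨hn.1, ?_⟩
        apply Nat.le_floor
        push_cast
        exact hn.2.2
      · intros; positivity
    calc ∑ r ∈ F, ∑ n ∈ T r, ‖a (n, r)‖ ^ 2
        ≤ ∑ r ∈ F, ∑ n ∈ Finset.Icc 1 M,
            (if n * r ^ 2 ≤ M then ‖a (n, r)‖ ^ 2 else 0) :=
          Finset.sum_le_sum (fun r _ => h1 r)
      _ ≤ ∑ r ∈ Finset.Icc 1 M, ∑ n ∈ Finset.Icc 1 M,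
            (if n * r ^ 2 ≤ M then ‖a (n, r)‖ ^ 2 else 0) := by
          apply Finset.sum_le_sum_of_subset_of_nonneg (Finset.filter_subset _ _)
          intros
          apply Finset.sum_nonneg
          intros
          positivity
      _ = ∑ n ∈ Finset.Icc 1 M, ∑ r ∈ Finset.Icc 1 M,
            (if n * r ^ 2 ≤ M then ‖a (n, r)‖ ^ 2 else 0) := Finset.sum_comm
      _ = ∑ p ∈ (Finset.Icc 1 M ×ˢ Finset.Icc 1 M).filter (fun p => p.1 * p.2 ^ 2 ≤ M),
            ‖a p‖ ^ 2 := by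
          rw [Finset.sum_filter, Finset.sum_product]
      _ ≤ K * (2 * N) ^ (1 + ε) := ha (2 * N) h2N1
      _ ≤ 4 * K * N ^ (1 + ε) := by nlinarith
  -- Step 4: the b-part bound
  have hB : ∑ r ∈ F, ∑ n ∈ T r, ‖b n‖ ^ 2 ≤ 8 * K * N ^ (1 + ε) / R := by
    have hper : ∀ r ∈ F, ∑ n ∈ T r, ‖b n‖ ^ 2 ≤
        K * (2 * N) ^ (1 + ε) * ((r : ℝ) ^ 2)⁻¹ := by
      intro r hr
      obtain ⟨hrIcc, _⟩ := Finset.mem_filter.mp hr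
      have hr1 : 1 ≤ r := (Finset.mem_Icc.mp hrIcc).1
      have hr1R : (1 : ℝ) ≤ (r : ℝ) := by exact_mod_cast hr1
      have hr2pos : (0 : ℝ) < (r : ℝ) ^ 2 := by positivity
      by_cases hx1 : (1 : ℝ) ≤ 2 * N / (r : ℝ) ^ 2
      · have hsub : T r ⊆ Finset.Icc 1 ⌊2 * N / (r : ℝ) ^ 2⌋₊ := by
          intro n hn
          rw [hTdef] at hn
          simp only [Finset.mem_filter, Finset.mem_Icc] at hn
          rw [Finset.mem_Icc]
          refine ⟨hn.1.1, ?_⟩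
          apply Nat.le_floor
          rw [le_div_iff₀ hr2pos]
          exact hn.2.2
        have hbb := hb (2 * N / (r : ℝ) ^ 2) hx1
        have h1 : ∑ n ∈ T r, ‖b n‖ ^ 2 ≤
            ∑ n ∈ Finset.Icc 1 ⌊2 * N / (r : ℝ) ^ 2⌋₊, ‖b n‖ ^ 2 := by
          apply Finset.sum_le_sum_of_subset_of_nonneg hsub
          intros; positivity
        have h2 : (2 * N / (r : ℝ) ^ 2) ^ (1 + ε) ≤ (2 * N) ^ (1 + ε) * ((r : ℝ) ^ 2)⁻¹ := by
          rw [Real.div_rpow (by linarith) hr2pos.le]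
          rw [div_eq_mul_inv]
          apply mul_le_mul_of_nonneg_left _ (Real.rpow_nonneg (by linarith) _)
          apply inv_anti₀ hr2pos
          calc (r : ℝ) ^ 2 = ((r : ℝ) ^ 2) ^ (1 : ℝ) := (Real.rpow_one _).symm
            _ ≤ ((r : ℝ) ^ 2) ^ (1 + ε) :=
              Real.rpow_le_rpow_of_exponent_le (by nlinarith) (by linarith)
        calc ∑ n ∈ T r, ‖b n‖ ^ 2
            ≤ K * (2 * N / (r : ℝ) ^ 2) ^ (1 + ε) := le_trans h1 hbb
          _ ≤ K * ((2 * N) ^ (1 + ε) * ((r : ℝ) ^ 2)⁻¹) :=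
              mul_le_mul_of_nonneg_left h2 hK
          _ = K * (2 * N) ^ (1 + ε) * ((r : ℝ) ^ 2)⁻¹ := by ring
      · have hTempty : T r = ∅ := by
          rw [Finset.eq_empty_iff_forall_notMem]
          intro n hn
          rw [hTdef] at hn
          simp only [Finset.mem_filter, Finset.mem_Icc] at hn
          have hn1 : (1 : ℝ) ≤ (n : ℝ) := by exact_mod_cast hn.1.1
          have : 2 * N < (r : ℝ) ^ 2 := by
            rw [not_le, div_lt_iff₀ hr2pos, one_mul] at hx1
            exact hx1
          nlinarith [hn.2.2]
        rw [hTempty, Finset.sum_empty]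
        have : (0:ℝ) ≤ K * (2 * N) ^ (1 + ε) * ((r : ℝ) ^ 2)⁻¹ := by positivity
        linarith
    have hceil1 : 1 ≤ ⌈R⌉₊ := Nat.one_le_ceil_iff.mpr hR0
    have hsum : ∑ r ∈ F, ((r : ℝ) ^ 2)⁻¹ ≤ 2 / R := by
      have hsub : F ⊆ Finset.Icc ⌈R⌉₊ M := by
        intro r hr
        obtain ⟨hrIcc, hrR⟩ := Finset.mem_filter.mp hr
        rw [Finset.mem_Icc]
        exact ⟨hrR, (Finset.mem_Icc.mp hrIcc).2⟩
      calc ∑ r ∈ F, ((r : ℝ) ^ 2)⁻¹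
          ≤ ∑ r ∈ Finset.Icc ⌈R⌉₊ M, ((r : ℝ) ^ 2)⁻¹ := by
            apply Finset.sum_le_sum_of_subset_of_nonneg hsub
            intros; positivity
        _ ≤ 2 / (⌈R⌉₊ : ℝ) := sum_inv_sq _ _ hceil1
        _ ≤ 2 / R := by
            apply div_le_div_of_nonneg_left (by norm_num) hR0 (Nat.le_ceil R)
    calc ∑ r ∈ F, ∑ n ∈ T r, ‖b n‖ ^ 2
        ≤ ∑ r ∈ F, K * (2 * N) ^ (1 + ε) * ((r : ℝ) ^ 2)⁻¹ := Finset.sum_le_sum hper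
      _ = K * (2 * N) ^ (1 + ε) * ∑ r ∈ F, ((r : ℝ) ^ 2)⁻¹ := by rw [Finset.mul_sum]
      _ ≤ K * (2 * N) ^ (1 + ε) * (2 / R) := by
          apply mul_le_mul_of_nonneg_left hsum
          positivity
      _ ≤ 8 * K * N ^ (1 + ε) / R := by
          rw [div_eq_mul_inv, div_eq_mul_inv]
          have hRinv : (0 : ℝ) < R⁻¹ := by positivity
          nlinarith [mul_le_mul_of_nonneg_left h2Npow hK]
  -- Assemble
  have hts : t⁻¹ / R = t := by
    have h2 : t⁻¹ = R ^ ((1 : ℝ) / 2) := by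
      rw [htdef, Real.rpow_neg hR0.le, inv_inv]
    have h1 : t = R ^ ((1 : ℝ) / 2) / R := by
      rw [htdef, show -(1 / 2 : ℝ) = 1 / 2 - 1 by norm_num, Real.rpow_sub hR0,
        Real.rpow_one]
    rw [h2, ← h1]
  have hX : 0 ≤ K * N ^ (1 + ε) := by positivity
  calc ∑ r ∈ F, ‖∑ n ∈ Finset.Icc 1 M, a (n, r) * b n * c (n, r)‖
      ≤ ∑ r ∈ F, (t / 2 * ∑ n ∈ T r, ‖a (n, r)‖ ^ 2 +
          t⁻¹ / 2 * ∑ n ∈ T r, ‖b n‖ ^ 2) := by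
        apply Finset.sum_le_sum
        intro r hr
        exact le_trans (step1 r hr) (step2 r)
    _ = t / 2 * (∑ r ∈ F, ∑ n ∈ T r, ‖a (n, r)‖ ^ 2) +
        t⁻¹ / 2 * (∑ r ∈ F, ∑ n ∈ T r, ‖b n‖ ^ 2) := by
        rw [Finset.sum_add_distrib, Finset.mul_sum, Finset.mul_sum]
    _ ≤ t / 2 * (4 * K * N ^ (1 + ε)) + t⁻¹ / 2 * (8 * K * N ^ (1 + ε) / R) := by
        apply add_le_add
        · exact mul_le_mul_of_nonneg_left hA (by positivity)
        · exact mul_le_mul_of_nonneg_left hB (by positivity)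
    _ ≤ 10 * K * N ^ (1 + ε) * t := by
        have e1 : t⁻¹ / 2 * (8 * K * N ^ (1 + ε) / R) =
            4 * (K * N ^ (1 + ε)) * (t⁻¹ / R) := by ring
        rw [e1, hts]
        nlinarith [mul_nonneg hX ht0.le]
end

section
/- Let p be a prime, let χ1 be a nontrivial Dirichlet character modulo p, and let α, β be integers with p ∤ α·β. Then for every integer v, L_{α,β}(v; p) = (1/τ(χ1)) · Σ_{c (mod p)} χ1(c) · Kl2(α·c; p) · e(−β·c·v/p), where χ1(c) = 0 when p | c. -/
open Finset

section LabAux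

lemma eZMod_eq_stdAddChar (c : ℕ) [NeZero c] (x : ZMod c) :
    eZMod c x = ZMod.stdAddChar x := by
  rw [ZMod.stdAddChar_apply, ZMod.toCircle_apply, eZMod, eR]
  push_cast
  ring_nf

lemma sum_range_zmod {M : Type*} [AddCommMonoid M] (p : ℕ) [NeZero p] (f : ZMod p → M) :
    ∑ b ∈ Finset.range p, f (b : ZMod p) = ∑ x : ZMod p, f x := by
  refine Finset.sum_nbij' (fun b => (b : ZMod p)) (fun x => x.val) ?_ ?_ ?_ ?_ ?_
  · intro a _; exact Finset.mem_univ _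
  · intro a _; exact Finset.mem_range.mpr (ZMod.val_lt a)
  · intro a ha; exact ZMod.val_cast_of_lt (Finset.mem_range.mp ha)
  · intro a _; exact ZMod.natCast_zmod_val a
  · intro a _; rfl

variable {p : ℕ} [hpf : Fact p.Prime]

local notation "ψ" => ZMod.stdAddChar (N := p)

lemma gauss_eq_gaussSum (χ1 : DirichletCharacter ℂ p) : gauss p χ1 = gaussSum χ1 ψ := by
  rw [gauss, gaussSum, sum_range_zmod p (fun x => χ1 x * eZMod p x)]
  exact Finset.sum_congr rfl fun x _ => by rw [eZMod_eq_stdAddChar]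

lemma Kl2_eq_psi (n : ZMod p) :
    Kl2 p n = ((1 / Real.sqrt p : ℝ) : ℂ) *
      ∑ x1 : ZMod p, ∑ x2 : ZMod p, if x1 * x2 = n then ψ (x1 + x2) else 0 := by
  rw [Kl2]
  congr 1
  rw [show (∑ x1 ∈ Finset.range p, ∑ x2 ∈ Finset.range p,
        if (x1 : ZMod p) * (x2 : ZMod p) = n then eR (((x1 : ℝ) + (x2 : ℝ)) / p) else 0)
      = ∑ x1 ∈ Finset.range p, ∑ x2 ∈ Finset.range p,
        if (x1 : ZMod p) * (x2 : ZMod p) = n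
        then ψ ((x1 : ZMod p) + (x2 : ZMod p)) else 0 from ?_]
  · rw [sum_range_zmod p (fun y => ∑ x2 ∈ Finset.range p,
      if y * (x2 : ZMod p) = n then ψ (y + (x2 : ZMod p)) else 0)]
    exact Finset.sum_congr rfl fun x1 _ => sum_range_zmod p
      (fun y => if x1 * y = n then ψ (x1 + y) else 0)
  · refine Finset.sum_congr rfl fun x1 hx1 => Finset.sum_congr rfl fun x2 hx2 => ?_
    congr 1
    rw [AddChar.map_add_eq_mul, ← eZMod_eq_stdAddChar, ← eZMod_eq_stdAddChar]
    simp only [eZMod, eR, ← Complex.exp_add]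
    congr 1
    rw [ZMod.val_cast_of_lt (Finset.mem_range.mp hx1),
      ZMod.val_cast_of_lt (Finset.mem_range.mp hx2)]
    push_cast
    ring

lemma Lab_eq_psi (χ1 : DirichletCharacter ℂ p) (α β v : ZMod p) :
    Lab p χ1 α β v = ((1 / Real.sqrt p : ℝ) : ℂ) *
      ∑ b : ZMod p, if b + β * v ≠ 0
        then (starRingEnd ℂ) (χ1 b) * ψ (α * (b + β * v)⁻¹) else 0 := by
  rw [Lab]
  congr 1
  rw [sum_range_zmod p (fun b => if Nat.Coprime ((b + β * v).val) p
      then (starRingEnd ℂ) (χ1 b) * eZMod p (α * (b + β * v)⁻¹) else 0)]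
  refine Finset.sum_congr rfl fun b _ => ?_
  rw [eZMod_eq_stdAddChar]
  congr 1
  rw [eq_iff_iff]
  rw [Nat.coprime_comm, Nat.Prime.coprime_iff_not_dvd hpf.out,
    ← ZMod.natCast_eq_zero_iff, ZMod.natCast_zmod_val]

lemma gauss_inversion (χ1 : DirichletCharacter ℂ p) (hχ1 : χ1 ≠ 1) (b : ZMod p) :
    ∑ c : ZMod p, χ1 c * ψ (b * c) = (starRingEnd ℂ) (χ1 b) * gaussSum χ1 ψ := by
  rcases eq_or_ne b 0 with hb | hb
  · subst hb
    simp only [zero_mul, AddChar.map_zero_eq_one, mul_one]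
    rw [MulChar.sum_eq_zero_of_ne_one hχ1, MulChar.map_nonunit χ1 not_isUnit_zero, map_zero,
      zero_mul]
  · have hu : IsUnit b := Ne.isUnit hb
    have h := gaussSum_mulShift χ1 ψ hu.unit
    have h2 : gaussSum χ1 ((ψ).mulShift hu.unit) = ∑ c : ZMod p, χ1 c * ψ (b * c) := by
      simp [gaussSum, AddChar.mulShift_apply, hu.unit_spec]
    rw [h2] at h
    rw [hu.unit_spec] at h
    have hconj : (starRingEnd ℂ) (χ1 b) = χ1⁻¹ b := by
      rw [← MulChar.star_apply' χ1 b]; rfl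
    have hinv : χ1⁻¹ b * χ1 b = 1 := by
      rw [← MulChar.mul_apply, inv_mul_cancel, ← hu.unit_spec, MulChar.one_apply_coe]
    calc ∑ c : ZMod p, χ1 c * ψ (b * c)
        = (χ1⁻¹ b * χ1 b) * ∑ c : ZMod p, χ1 c * ψ (b * c) := by rw [hinv, one_mul]
      _ = (starRingEnd ℂ) (χ1 b) * gaussSum χ1 ψ := by
          rw [mul_assoc] at *
          rw [h, hconj]

lemma kloos_unfold (α c : ZMod p) (hα : α ≠ 0) (hc : c ≠ 0) :
    (∑ x1 : ZMod p, ∑ x2 : ZMod p, if x1 * x2 = α * c then ψ (x1 + x2) else 0)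
    = ∑ x : ZMod p, if x ≠ 0 then ψ (c * x + α * x⁻¹) else 0 := by
  have hαc : α * c ≠ 0 := mul_ne_zero hα hc
  have inner : ∀ x1 : ZMod p,
      (∑ x2 : ZMod p, if x1 * x2 = α * c then ψ (x1 + x2) else 0)
      = if x1 ≠ 0 then ψ (x1 + x1⁻¹ * (α * c)) else 0 := by
    intro x1
    rcases eq_or_ne x1 0 with h | h
    · subst h
      rw [if_neg (by simp)]
      exact Finset.sum_eq_zero fun x2 _ => if_neg (by simpa using hαc.symm)
    · rw [if_pos h]
      have hcond : ∀ x2 : ZMod p, (x1 * x2 = α * c) ↔ (x2 = x1⁻¹ * (α * c)) := by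
        intro x2
        constructor
        · intro hh; field_simp [h]; rw [mul_comm] at hh; exact hh
        · intro hh; subst hh; field_simp [h]
      simp_rw [hcond]
      rw [Finset.sum_ite_eq' Finset.univ (x1⁻¹ * (α * c)) (fun x2 => ψ (x1 + x2)),
        if_pos (Finset.mem_univ _)]
  simp_rw [inner]
  refine Fintype.sum_equiv (Equiv.mulLeft₀ c⁻¹ (inv_ne_zero hc)) _ _ fun x => ?_
  simp only [Equiv.mulLeft₀_apply]
  rcases eq_or_ne x 0 with h | h
  · subst h; simp
  · rw [if_pos h, if_pos (mul_ne_zero (inv_ne_zero hc) h)]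
    congr 1
    rw [mul_inv_rev, inv_inv,
      show c * (c⁻¹ * x) = (c * c⁻¹) * x by ring, mul_inv_cancel₀ hc, one_mul]
    ring

lemma key_identity (χ1 : DirichletCharacter ℂ p) (hχ1 : χ1 ≠ 1) (α β v : ZMod p) (hα : α ≠ 0) :
    gaussSum χ1 ψ * (∑ b : ZMod p, if b + β * v ≠ 0
        then (starRingEnd ℂ) (χ1 b) * ψ (α * (b + β * v)⁻¹) else 0)
    = ∑ c : ZMod p, χ1 c *
        (∑ x1 : ZMod p, ∑ x2 : ZMod p, if x1 * x2 = α * c then ψ (x1 + x2) else 0) *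
        ψ (-β * c * v) := by
  have h1 : (∑ b : ZMod p, if b + β * v ≠ 0
        then (starRingEnd ℂ) (χ1 b) * ψ (α * (b + β * v)⁻¹) else 0)
      = ∑ x : ZMod p, if x ≠ 0
        then (starRingEnd ℂ) (χ1 (x - β * v)) * ψ (α * x⁻¹) else 0 := by
    refine Fintype.sum_equiv (Equiv.addRight (β * v)) _ _ fun x => ?_
    simp only [Equiv.coe_addRight, add_sub_cancel_right]
  rw [h1, Finset.mul_sum]
  have h2 : ∀ x : ZMod p,
      gaussSum χ1 ψ * (if x ≠ 0
        then (starRingEnd ℂ) (χ1 (x - β * v)) * ψ (α * x⁻¹) else 0)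
      = ∑ c : ZMod p, if x ≠ 0
        then χ1 c * ψ ((x - β * v) * c) * ψ (α * x⁻¹) else 0 := by
    intro x
    rcases eq_or_ne x 0 with h | h
    · simp [h]
    · rw [if_pos h]
      rw [show gaussSum χ1 ψ * ((starRingEnd ℂ) (χ1 (x - β * v)) * ψ (α * x⁻¹))
          = ((starRingEnd ℂ) (χ1 (x - β * v)) * gaussSum χ1 ψ) * ψ (α * x⁻¹) from by ring,
        ← gauss_inversion χ1 hχ1 (x - β * v), Finset.sum_mul]
      exact Finset.sum_congr rfl fun c _ => by rw [if_pos h]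
  simp_rw [h2]
  rw [Finset.sum_comm]
  refine Finset.sum_congr rfl fun c _ => ?_
  rcases eq_or_ne c 0 with hc | hc
  · subst hc
    rw [MulChar.map_nonunit χ1 not_isUnit_zero]
    simp
  · rw [kloos_unfold α c hα hc, Finset.mul_sum, Finset.sum_mul]
    refine Finset.sum_congr rfl fun x _ => ?_
    rcases eq_or_ne x 0 with h | h
    · simp [h]
    · rw [if_pos h, if_pos h, mul_assoc, ← AddChar.map_add_eq_mul,
        mul_assoc, ← AddChar.map_add_eq_mul]
      congr 1
      ring_nf

end LabAux

/-- expansion of `L_{α,β}(v; p)` in terms of Kloosterman sums. -/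
theorem Lab_expansion
    (p : ℕ) (hp : p.Prime) (χ1 : DirichletCharacter ℂ p) (hχ1 : χ1 ≠ 1)
    (α β : ℤ) (hαβ : ¬ ((p : ℤ) ∣ α * β)) (v : ℤ) :
    Lab p χ1 (α : ZMod p) (β : ZMod p) (v : ZMod p)
    = (1 / gauss p χ1) *
        ∑ c ∈ Finset.range p,
          χ1 (c : ZMod p) * Kl2 p ((α : ZMod p) * (c : ZMod p)) *
            eZMod p (-(β : ZMod p) * (c : ZMod p) * (v : ZMod p)) := by
  haveI : Fact p.Prime := ⟨hp⟩
  have hα : (α : ZMod p) ≠ 0 := by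
    intro h
    exact hαβ (Dvd.dvd.mul_right ((ZMod.intCast_zmod_eq_zero_iff_dvd α p).mp h) β)
  have hG : gaussSum χ1 (ZMod.stdAddChar (N := p)) ≠ 0 := by
    refine gaussSum_ne_zero_of_nontrivial ?_ hχ1 (ZMod.isPrimitive_stdAddChar p)
    simp only [ZMod.card]
    exact_mod_cast hp.pos.ne'
  rw [Lab_eq_psi χ1 (α : ZMod p) (β : ZMod p) (v : ZMod p), gauss_eq_gaussSum χ1,
    sum_range_zmod p (fun c => χ1 c * Kl2 p ((α : ZMod p) * c) *
      eZMod p (-(β : ZMod p) * c * (v : ZMod p)))]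
  have hkey := key_identity χ1 hχ1 (α : ZMod p) (β : ZMod p) (v : ZMod p) hα
  have hstep : (∑ c : ZMod p, χ1 c * Kl2 p ((α : ZMod p) * c) *
        eZMod p (-(β : ZMod p) * c * (v : ZMod p)))
      = ((1 / Real.sqrt p : ℝ) : ℂ) * ∑ c : ZMod p, χ1 c *
          (∑ x1 : ZMod p, ∑ x2 : ZMod p,
            if x1 * x2 = (α : ZMod p) * c then ZMod.stdAddChar (x1 + x2) else 0) *
          ZMod.stdAddChar (-(β : ZMod p) * c * (v : ZMod p)) := by
    rw [Finset.mul_sum]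
    refine Finset.sum_congr rfl fun c _ => ?_
    rw [Kl2_eq_psi, eZMod_eq_stdAddChar]
    ring
  rw [hstep, ← hkey]
  field_simp
end

section
/- Let p be a prime, let χ1 be a nontrivial Dirichlet character modulo p, and let α, β be integers with p ∤ α·β. For a function F : ℤ/pℤ → ℂ, write F̂(t) = p^{-1/2} Σ_{a (mod p)} F(a)·e(a·t/p). Then the Fourier transform of v ↦ L_{α,β}(v; p) satisfies, for every integer t, L̂_{α,β}(t) = (p^{1/2}/τ(χ1)) · χ1(inv(β)·t) · Kl2(α·inv(β)·t; p), where inv(β) is the inverse of β modulo p and χ1(x) = 0 when p | x. -/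
open Finset

open AddChar

lemma eZMod_eq_std {p : ℕ} [NeZero p] (x : ZMod p) : eZMod p x = ZMod.stdAddChar x := by
  rw [eZMod, eR, ZMod.stdAddChar_apply, ZMod.toCircle_apply]
  congr 1
  push_cast
  ring

lemma sum_range_natCast {p : ℕ} [NeZero p] (f : ZMod p → ℂ) :
    ∑ a ∈ Finset.range p, f ((a : ℕ) : ZMod p) = ∑ a : ZMod p, f a :=
  Finset.sum_nbij' (fun (a : ℕ) => ((a : ℕ) : ZMod p)) (fun a => a.val)
    (fun _ _ => Finset.mem_univ _)
    (fun a _ => Finset.mem_range.mpr (ZMod.val_lt a))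
    (fun a ha => ZMod.val_natCast_of_lt (Finset.mem_range.mp ha))
    (fun a _ => ZMod.natCast_rightInverse a)
    (fun _ _ => rfl)

lemma gauss_twist {p : ℕ} [Fact p.Prime] (χ : DirichletCharacter ℂ p) (hχ : χ ≠ 1) (u : ZMod p) :
    (∑ b : ZMod p, (starRingEnd ℂ) (χ b) * ZMod.stdAddChar (-(u * b))) * gaussSum χ ZMod.stdAddChar
      = (p : ℂ) * χ u := by
  set ψ : AddChar (ZMod p) ℂ := ZMod.stdAddChar with hψdef
  have hψ : ψ.IsPrimitive := ZMod.isPrimitive_stdAddChar p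
  have hstar : ∀ b : ZMod p, (starRingEnd ℂ) (χ b) = χ⁻¹ b := fun b => MulChar.star_apply' χ b
  by_cases hu : u = 0
  · have h0 : χ u = 0 := by
      rw [hu]; exact χ.map_nonunit not_isUnit_zero
    have hsum : (∑ b : ZMod p, (starRingEnd ℂ) (χ b) * ψ (-(u * b))) = 0 := by
      have h : ∀ b : ZMod p, (starRingEnd ℂ) (χ b) * ψ (-(u * b)) = χ⁻¹ b := by
        intro b
        rw [hstar, hu, zero_mul, neg_zero, map_zero_eq_one, mul_one]
      rw [Finset.sum_congr rfl fun b _ => h b]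
      refine MulChar.sum_eq_zero_of_ne_one ?_
      intro h
      exact hχ (by rwa [inv_eq_one] at h)
    rw [hsum, h0, zero_mul, mul_zero]
  · have hu' : IsUnit u := isUnit_iff_ne_zero.mpr hu
    have hsum : (∑ b : ZMod p, (starRingEnd ℂ) (χ b) * ψ (-(u * b)))
        = gaussSum χ⁻¹ (mulShift ψ⁻¹ u) := by
      rw [gaussSum]
      refine Finset.sum_congr rfl fun b _ => ?_
      rw [hstar, inv_mulShift, mulShift_mulShift, mulShift_apply, neg_one_mul, neg_mul]
    have key := gaussSum_mulShift χ⁻¹ ψ⁻¹ hu'.unit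
    rw [IsUnit.unit_spec] at key
    have hcard := gaussSum_mul_gaussSum_eq_card hχ hψ
    have hone : χ u * χ⁻¹ u = 1 := by
      rw [MulChar.inv_apply', ← map_mul, mul_inv_cancel₀ hu, map_one]
    calc (∑ b : ZMod p, (starRingEnd ℂ) (χ b) * ψ (-(u * b))) * gaussSum χ ψ
        = (χ u * χ⁻¹ u) * (gaussSum χ⁻¹ (mulShift ψ⁻¹ u) * gaussSum χ ψ) := by
          rw [hone, hsum, one_mul]
      _ = χ u * ((χ⁻¹ u * gaussSum χ⁻¹ (mulShift ψ⁻¹ u)) * gaussSum χ ψ) := by ring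
      _ = (p : ℂ) * χ u := by
          rw [key, mul_comm (gaussSum χ⁻¹ ψ⁻¹), hcard, ZMod.card]; ring

lemma kloos_reindex {p : ℕ} [Fact p.Prime] (A u : ZMod p) (hA : A ≠ 0) (hu : u ≠ 0) :
    ∑ x1 : ZMod p, ∑ x2 : ZMod p,
        (if x1 * x2 = A * u then ZMod.stdAddChar x1 * ZMod.stdAddChar x2 else 0)
      = ∑ c : ZMod p, (if c ≠ 0 then ZMod.stdAddChar (A * c⁻¹) * ZMod.stdAddChar (u * c) else 0) := by
  set ψ : AddChar (ZMod p) ℂ := ZMod.stdAddChar with hψdef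
  have hn : A * u ≠ 0 := mul_ne_zero hA hu
  have step1 : ∀ x1 : ZMod p,
      (∑ x2 : ZMod p, if x1 * x2 = A * u then ψ x1 * ψ x2 else 0)
        = if x1 ≠ 0 then ψ x1 * ψ (x1⁻¹ * (A * u)) else 0 := by
    intro x1
    by_cases hx1 : x1 = 0
    · simp [hx1, Ne.symm hn]
    · have hiff : ∀ x2 : ZMod p, (x1 * x2 = A * u) ↔ x2 = x1⁻¹ * (A * u) := by
        intro x2
        rw [eq_comm (a := x1 * x2), eq_inv_mul_iff_mul_eq₀ hx1, eq_comm]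
      rw [Finset.sum_congr rfl fun x2 _ => if_congr (hiff x2) rfl rfl]
      rw [Finset.sum_ite_eq' Finset.univ (x1⁻¹ * (A * u)) (fun x2 => ψ x1 * ψ x2)]
      simp [hx1]
  rw [Finset.sum_congr rfl fun x1 _ => step1 x1]
  refine (Fintype.sum_bijective (fun c : ZMod p => u * c) (mulLeft_bijective₀ u hu) _ _ ?_).symm
  intro c
  by_cases hc : c = 0
  · simp [hc, hu]
  · have huc : u * c ≠ 0 := mul_ne_zero hu hc
    rw [if_pos hc, if_pos huc]
    have h2 : (u * c)⁻¹ * (A * u) = A * c⁻¹ := by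
      field_simp
    rw [h2, mul_comm (ψ (A * c⁻¹))]

/-- the Fourier transform of `v ↦ L_{α,β}(v; p)`. -/
theorem Lab_fourier_transform
    (p : ℕ) (hp : p.Prime) (χ1 : DirichletCharacter ℂ p) (hχ1 : χ1 ≠ 1)
    (α β : ℤ) (hαβ : ¬ ((p : ℤ) ∣ α * β)) (t : ℤ) :
    ((1 / Real.sqrt p : ℝ) : ℂ) *
      ∑ a ∈ Finset.range p,
        Lab p χ1 (α : ZMod p) (β : ZMod p) (a : ZMod p) *
          eZMod p ((a : ZMod p) * (t : ZMod p))
    = ((Real.sqrt p : ℝ) : ℂ) / gauss p χ1 *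
        χ1 (((β : ZMod p))⁻¹ * (t : ZMod p)) *
        Kl2 p ((α : ZMod p) * ((β : ZMod p))⁻¹ * (t : ZMod p)) := by
  haveI : Fact p.Prime := ⟨hp⟩
  haveI : NeZero p := ⟨hp.ne_zero⟩
  set ψ : AddChar (ZMod p) ℂ := ZMod.stdAddChar with hψdef
  set A : ZMod p := (α : ZMod p) with hAdef
  set B : ZMod p := (β : ZMod p) with hBdef
  set T : ZMod p := (t : ZMod p) with hTdef
  set u : ZMod p := B⁻¹ * T with hudef
  have hA : A ≠ 0 := by
    rw [hAdef, Ne, ZMod.intCast_zmod_eq_zero_iff_dvd]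
    exact fun h => hαβ (Dvd.dvd.mul_right h β)
  have hB : B ≠ 0 := by
    rw [hBdef, Ne, ZMod.intCast_zmod_eq_zero_iff_dvd]
    exact fun h => hαβ (Dvd.dvd.mul_left h α)
  have hcop : ∀ x : ZMod p, Nat.Coprime x.val p ↔ x ≠ 0 := by
    intro x
    rw [Nat.coprime_comm, hp.coprime_iff_not_dvd]
    constructor
    · intro h hx
      rw [hx] at h
      exact h (by simp)
    · intro hx hdvd
      exact hx ((ZMod.val_eq_zero x).mp (Nat.eq_zero_of_dvd_of_lt hdvd (ZMod.val_lt x)))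
  -- notation
  set c0 : ℂ := ((1 / Real.sqrt p : ℝ) : ℂ) with hc0def
  set S : ℂ := ∑ a : ZMod p, ∑ b : ZMod p,
      (if b + B * a ≠ 0 then (starRingEnd ℂ) (χ1 b) * ψ (A * (b + B * a)⁻¹) * ψ (a * T) else 0)
    with hSdef
  set G : ℂ := ∑ b : ZMod p, (starRingEnd ℂ) (χ1 b) * ψ (-(u * b)) with hGdef
  set K : ℂ := ∑ c : ZMod p, (if c ≠ 0 then ψ (A * c⁻¹) * ψ (u * c) else 0) with hKdef
  set TS : ℂ := ∑ x1 : ZMod p, ∑ x2 : ZMod p,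
      (if x1 * x2 = A * u then ψ x1 * ψ x2 else 0) with hTSdef
  -- Lab rewrite
  have hLab : ∀ v : ZMod p, Lab p χ1 A B v
      = c0 * ∑ b : ZMod p,
          (if b + B * v ≠ 0 then (starRingEnd ℂ) (χ1 b) * ψ (A * (b + B * v)⁻¹) else 0) := by
    intro v
    rw [Lab]
    congr 1
    rw [← sum_range_natCast (fun b => if b + B * v ≠ 0
        then (starRingEnd ℂ) (χ1 b) * ψ (A * (b + B * v)⁻¹) else 0)]
    refine Finset.sum_congr rfl fun b _ => ?_
    rw [eZMod_eq_std]
    exact if_congr (hcop _) rfl rfl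
  -- LHS conversion
  have hLHS : (∑ a ∈ Finset.range p, Lab p χ1 A B ((a : ℕ) : ZMod p)
        * eZMod p (((a : ℕ) : ZMod p) * T)) = c0 * S := by
    rw [sum_range_natCast (fun a => Lab p χ1 A B a * eZMod p (a * T))]
    rw [hSdef, Finset.mul_sum]
    refine Finset.sum_congr rfl fun a _ => ?_
    rw [hLab a, eZMod_eq_std, mul_assoc, Finset.sum_mul]
    congr 1
    refine Finset.sum_congr rfl fun b _ => ?_
    split_ifs with h
    · ring
    · rw [zero_mul]
  -- factorization
  have hfact : S = G * K := by
    rw [hSdef, Finset.sum_comm, hGdef, hKdef, Finset.sum_mul_sum]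
    refine Finset.sum_congr rfl fun b _ => ?_
    refine Fintype.sum_bijective (fun a : ZMod p => b + B * a)
      (Function.Bijective.comp (Equiv.addLeft b).bijective (mulLeft_bijective₀ B hB)) _ _ ?_
    intro a
    by_cases h : b + B * a = 0
    · rw [if_neg (not_not_intro h), if_neg (not_not_intro h), mul_zero]
    · rw [if_pos h, if_pos h]
      have hTa : ψ (a * T) = ψ (-(u * b)) * ψ (u * (b + B * a)) := by
        rw [← map_add_eq_mul]
        congr 1
        rw [hudef]
        field_simp
        ring
      rw [hTa]
      ring
  -- Kl2 conversion
  have heR : ∀ (x1 x2 : ℕ), eR (((x1 : ℝ) + (x2 : ℝ)) / p)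
      = ψ ((x1 : ℕ) : ZMod p) * ψ ((x2 : ℕ) : ZMod p) := by
    intro x1 x2
    have h1 := ZMod.stdAddChar_coe (N := p) (x1 : ℤ)
    have h2 := ZMod.stdAddChar_coe (N := p) (x2 : ℤ)
    push_cast at h1 h2
    rw [hψdef, eR, h1, h2, ← Complex.exp_add]
    congr 1
    push_cast
    ring
  have hKl : Kl2 p (A * B⁻¹ * T) = c0 * TS := by
    rw [Kl2, hTSdef]
    congr 1
    have hmul : A * B⁻¹ * T = A * u := by rw [hudef]; ring
    rw [← sum_range_natCast (fun x1 => ∑ x2 : ZMod p, if x1 * x2 = A * u then ψ x1 * ψ x2 else 0)]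
    refine Finset.sum_congr rfl fun x1 _ => ?_
    rw [← sum_range_natCast (fun x2 => if ((x1 : ℕ) : ZMod p) * x2 = A * u
        then ψ ((x1 : ℕ) : ZMod p) * ψ x2 else 0)]
    refine Finset.sum_congr rfl fun x2 _ => ?_
    rw [hmul]
    exact if_congr Iff.rfl (heR x1 x2) rfl
  -- gauss conversion
  have hgauss : gauss p χ1 = gaussSum χ1 ψ := by
    rw [gauss, gaussSum, ← sum_range_natCast (fun a => χ1 a * ψ a)]
    exact Finset.sum_congr rfl fun a _ => by rw [eZMod_eq_std]
  have hτ0 : gaussSum χ1 ψ ≠ 0 :=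
    gaussSum_ne_zero_of_nontrivial
      (by rw [ZMod.card]; exact_mod_cast Nat.cast_ne_zero.mpr hp.ne_zero)
      hχ1 (ZMod.isPrimitive_stdAddChar p)
  -- main identity
  have hGK := gauss_twist χ1 hχ1 u
  have hmain : S * gaussSum χ1 ψ = (p : ℂ) * χ1 u * TS := by
    rw [hfact]
    have step : G * K * gaussSum χ1 ψ = K * ((p : ℂ) * χ1 u) := by
      rw [← hGK]; ring
    rw [step]
    by_cases hT : u = 0
    · have h0 : χ1 u = 0 := by rw [hT]; exact χ1.map_nonunit not_isUnit_zero
      rw [h0]; ring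
    · have hKT : TS = K := kloos_reindex A u hA hT
      rw [hKT]; ring
  -- final assembly
  rw [hLHS, hKl, hgauss]
  have hsp0 : ((Real.sqrt p : ℝ) : ℂ) ≠ 0 := by
    rw [Complex.ofReal_ne_zero]
    exact ne_of_gt (Real.sqrt_pos.mpr (by exact_mod_cast hp.pos))
  have hc0 : c0 = ((Real.sqrt p : ℝ) : ℂ)⁻¹ := by
    rw [hc0def]
    push_cast
    rw [one_div]
  have hsq' : ((Real.sqrt p : ℝ) : ℂ) * ((Real.sqrt p : ℝ) : ℂ) = (p : ℂ) := by
    rw [← Complex.ofReal_mul, Real.mul_self_sqrt (Nat.cast_nonneg p)]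
    norm_num
  rw [hc0]
  field_simp
  linear_combination hmain - χ1 u * TS * hsq'
end

section
/- Let p be a prime, let χ1 be a nontrivial Dirichlet character modulo p, and let α, β, γ be integers with p ∤ α·β. Define K(u) = Kl2(γ·u; p) for u ∈ (ℤ/pℤ)^×, L(v) = L_{α,β}(v; p), the normalized multiplicative convolution (K⋆L)(v) = p^{-1/2} Σ_{u (mod p), p ∤ u} K(u)·L(v·inv(u)) (inv(u) the inverse of u mod p), and Z(t) = p^{-1/2} Σ_{a (mod p)} (K⋆L)(a)·e(a·t/p). Then for every integer t, Z(t) = (1/τ(χ1)) · Σ_{u (mod p), p ∤ u} Kl2(β·γ·u; p) · χ1(u·t) · Kl2(α·u·t; p), where χ1(x) = 0 when p | x. -/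
open Finset

section CFTaux

open ZMod

variable {p : ℕ} [hp : Fact p.Prime]

lemma CFT.sum_range_eq (f : ZMod p → ℂ) :
    ∑ a ∈ Finset.range p, f (a : ZMod p) = ∑ a : ZMod p, f a := by
  refine Finset.sum_nbij' (fun a => (a : ZMod p)) (fun x => x.val) (fun a _ => mem_univ _)
    (fun x _ => mem_range.2 (ZMod.val_lt x)) (fun a ha => ?_) (fun x _ => ZMod.natCast_zmod_val x)
    (fun a _ => rfl)
  exact ZMod.val_cast_of_lt (mem_range.1 ha)

lemma CFT.coprime_iff_ne_zero {u : ℕ} (hu : u < p) : Nat.Coprime u p ↔ (u : ZMod p) ≠ 0 := by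
  rw [Ne, ZMod.natCast_eq_zero_iff, Nat.coprime_comm,
    Nat.Prime.coprime_iff_not_dvd hp.out]

lemma CFT.sum_coprime_eq (f : ZMod p → ℂ) :
    ∑ u ∈ (Finset.range p).filter (fun u => Nat.Coprime u p), f (u : ZMod p)
      = ∑ u ∈ univ.filter (fun x : ZMod p => x ≠ 0), f u := by
  refine Finset.sum_nbij' (fun a => (a : ZMod p)) (fun x => x.val) ?_ ?_ ?_
    (fun x _ => ZMod.natCast_zmod_val x) (fun a _ => rfl)
  · intro a ha
    simp only [mem_filter, mem_range] at ha ⊢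
    exact ⟨mem_univ _, (CFT.coprime_iff_ne_zero ha.1).mp ha.2⟩
  · intro x hx
    simp only [mem_filter, mem_univ, true_and] at hx
    simp only [mem_filter, mem_range]
    refine ⟨ZMod.val_lt x, (CFT.coprime_iff_ne_zero (ZMod.val_lt x)).mpr ?_⟩
    rwa [ZMod.natCast_zmod_val]
  · intro a ha
    simp only [mem_filter, mem_range] at ha
    exact ZMod.val_cast_of_lt ha.1

lemma CFT.eZMod_eq (x : ZMod p) : eZMod p x = ZMod.stdAddChar x := by
  rw [ZMod.stdAddChar_apply, ZMod.toCircle_apply, eZMod, eR]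
  push_cast
  ring_nf

lemma CFT.eR_nat (m : ℕ) : eR ((m : ℝ) / p) = ZMod.stdAddChar (m : ZMod p) := by
  have h : ((m : ℤ) : ZMod p) = (m : ZMod p) := by push_cast; ring
  rw [eR, ← h, ZMod.stdAddChar_coe]
  push_cast
  ring_nf

lemma CFT.Kl2_eq (n : ZMod p) (hn : n ≠ 0) :
    Kl2 p n = ((1 / Real.sqrt p : ℝ) : ℂ) *
      ∑ x ∈ univ.filter (fun x : ZMod p => x ≠ 0), ZMod.stdAddChar (x + n * x⁻¹) := by
  rw [Kl2]
  congr 1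
  have h1 : ∀ x1 x2 : ℕ, eR (((x1 : ℝ) + (x2 : ℝ)) / p)
      = ZMod.stdAddChar ((x1 : ZMod p) + (x2 : ZMod p)) := by
    intro x1 x2
    rw [show ((x1:ℝ) + x2) = ((x1 + x2 : ℕ) : ℝ) by push_cast; ring, CFT.eR_nat]
    push_cast
    ring_nf
  calc ∑ x1 ∈ Finset.range p, ∑ x2 ∈ Finset.range p,
        (if (x1 : ZMod p) * (x2 : ZMod p) = n then eR (((x1 : ℝ) + (x2 : ℝ)) / p) else 0)
      = ∑ x1 : ZMod p, ∑ x2 : ZMod p,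
        (if x1 * x2 = n then ZMod.stdAddChar (x1 + x2) else 0) := by
        rw [← CFT.sum_range_eq (fun x1 : ZMod p => ∑ x2 : ZMod p, (if x1 * x2 = n then ZMod.stdAddChar (x1 + x2) else 0))]
        refine Finset.sum_congr rfl fun x1 _ => ?_
        rw [← CFT.sum_range_eq (fun x2 : ZMod p => (if (x1 : ZMod p) * x2 = n then ZMod.stdAddChar ((x1 : ZMod p) + x2) else 0))]
        refine Finset.sum_congr rfl fun x2 _ => ?_
        rw [h1]
    _ = ∑ x1 : ZMod p, (if x1 ≠ 0 then ZMod.stdAddChar (x1 + n * x1⁻¹) else 0) := by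
        refine Finset.sum_congr rfl fun x1 _ => ?_
        by_cases hx1 : x1 = 0
        · subst hx1
          rw [if_neg (fun h => h rfl)]
          refine Finset.sum_eq_zero fun x2 _ => ?_
          rw [zero_mul, if_neg (fun h => hn h.symm)]
        · rw [if_pos hx1]
          have : ∀ x2 : ZMod p, (x1 * x2 = n) = (x2 = x1⁻¹ * n) := by
            intro x2
            apply propext
            rw [eq_comm, eq_inv_mul_iff_mul_eq₀ hx1]
            exact eq_comm
          simp_rw [this]
          rw [Finset.sum_ite_eq' univ (x1⁻¹ * n) (fun x2 => ZMod.stdAddChar (x1 + x2)), if_pos (mem_univ _)]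
          congr 1
          ring
    _ = ∑ x ∈ univ.filter (fun x : ZMod p => x ≠ 0), ZMod.stdAddChar (x + n * x⁻¹) := by
        rw [Finset.sum_filter]

lemma CFT.Lab_eq (χ1 : DirichletCharacter ℂ p) (αz βz v : ZMod p) :
    Lab p χ1 αz βz v = ((1 / Real.sqrt p : ℝ) : ℂ) *
      ∑ b : ZMod p, (if b + βz * v ≠ 0 then χ1⁻¹ b * ZMod.stdAddChar (αz * (b + βz * v)⁻¹) else 0) := by
  rw [Lab]
  congr 1
  rw [← CFT.sum_range_eq (fun b : ZMod p => (if b + βz * v ≠ 0 then χ1⁻¹ b * ZMod.stdAddChar (αz * (b + βz * v)⁻¹) else 0))]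
  refine Finset.sum_congr rfl fun b _ => ?_
  have hcop : Nat.Coprime (((b : ZMod p) + βz * v).val) p ↔ ((b : ZMod p) + βz * v) ≠ 0 := by
    rw [CFT.coprime_iff_ne_zero (ZMod.val_lt _), ZMod.natCast_zmod_val]
  by_cases h : ((b : ZMod p) + βz * v) = 0
  · rw [if_neg (fun hc => (hcop.mp hc) h), if_neg (fun hc => hc h)]
  · rw [if_pos (hcop.mpr h), if_pos h, CFT.eZMod_eq]
    congr 1
    exact (MulChar.star_apply' χ1 _).symm ▸ rfl

lemma CFT.gauss_eq (χ1 : DirichletCharacter ℂ p) :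
    gauss p χ1 = gaussSum χ1 ZMod.stdAddChar := by
  rw [gauss, gaussSum,
    ← CFT.sum_range_eq (fun a : ZMod p => χ1 a * ZMod.stdAddChar a)]
  exact Finset.sum_congr rfl fun a _ => by rw [CFT.eZMod_eq]

lemma CFT.isPrim {χ : DirichletCharacter ℂ p} (h : χ ≠ 1) : χ.IsPrimitive := by
  have hd := DirichletCharacter.conductor_dvd_level χ
  rcases (Nat.Prime.eq_one_or_self_of_dvd hp.out _ hd) with h1 | h1
  · exact absurd (DirichletCharacter.eq_one_iff_conductor_eq_one.2 h1) h
  · exact h1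

lemma CFT.w_sum (χ1 : DirichletCharacter ℂ p) (αz c : ZMod p) (hα : αz ≠ 0) :
    χ1 c * ∑ w ∈ univ.filter (fun x : ZMod p => x ≠ 0), ZMod.stdAddChar (αz * w⁻¹ + c * w)
    = χ1 c * (((Real.sqrt p : ℝ) : ℂ) * Kl2 p (αz * c)) := by
  by_cases hc : c = 0
  · subst hc
    rw [MulChar.map_nonunit χ1 (by simpa using not_isUnit_zero), zero_mul, zero_mul]
  · congr 1
    have hS : ((Real.sqrt p : ℝ) : ℂ) * ((1 / Real.sqrt p : ℝ) : ℂ) = 1 := by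
      rw [← Complex.ofReal_mul, mul_one_div, div_self, Complex.ofReal_one]
      exact Real.sqrt_ne_zero'.mpr (by exact_mod_cast hp.out.pos)
    rw [CFT.Kl2_eq (αz * c) (mul_ne_zero hα hc), ← mul_assoc, hS, one_mul]
    refine Finset.sum_nbij' (fun w => c * w) (fun x => c⁻¹ * x) ?_ ?_ ?_ ?_ ?_
    · intro w hw
      simp only [mem_filter, mem_univ, true_and] at hw ⊢
      exact mul_ne_zero hc hw
    · intro x hx
      simp only [mem_filter, mem_univ, true_and] at hx ⊢
      exact mul_ne_zero (inv_ne_zero hc) hx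
    · intro w _; field_simp
    · intro x _; field_simp
    · intro w hw
      simp only [mem_filter, mem_univ, true_and] at hw
      congr 1
      rw [mul_inv]
      field_simp
      ring

lemma CFT.b_sum (χ1 : DirichletCharacter ℂ p) (hχ1 : χ1 ≠ 1) (c : ZMod p) :
    ∑ b : ZMod p, χ1⁻¹ b * ZMod.stdAddChar (-(c * b))
    = χ1 (-1) * χ1 c * gaussSum χ1⁻¹ ZMod.stdAddChar := by
  have hprim : (χ1⁻¹).IsPrimitive := CFT.isPrim (fun h => hχ1 (inv_injective (h.trans inv_one.symm)))
  have h1 : ∑ b : ZMod p, χ1⁻¹ b * ZMod.stdAddChar (-(c * b))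
      = gaussSum χ1⁻¹ (ZMod.stdAddChar.mulShift (-c)) := by
    rw [gaussSum]
    refine Finset.sum_congr rfl fun b _ => ?_
    rw [AddChar.mulShift_apply, neg_mul]
  rw [h1, gaussSum_mulShift_of_isPrimitive _ hprim, inv_inv, show (-c : ZMod p) = -1 * c by ring,
    map_mul]

lemma CFT.key_sum (χ1 : DirichletCharacter ℂ p) (hχ1 : χ1 ≠ 1) (αz βz tz u : ZMod p)
    (hα : αz ≠ 0) (hβ : βz ≠ 0) (hu : u ≠ 0) :
    ∑ a : ZMod p, Lab p χ1 αz βz (a * u⁻¹) * ZMod.stdAddChar (a * tz)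
    = ((1 / Real.sqrt p : ℝ) : ℂ) * (χ1 (-1) * gaussSum χ1⁻¹ ZMod.stdAddChar)
        * (χ1 (u * tz * βz⁻¹) * (((Real.sqrt p : ℝ)) : ℂ) * Kl2 p (αz * (u * tz * βz⁻¹))) := by
  set ψ : AddChar (ZMod p) ℂ := ZMod.stdAddChar with hψ
  set S : ℂ := ((1 / Real.sqrt p : ℝ) : ℂ) with hSdef
  set c : ZMod p := u * tz * βz⁻¹ with hc
  set W : ℂ := ∑ w ∈ univ.filter (fun x : ZMod p => x ≠ 0), ψ (αz * w⁻¹ + c * w) with hW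
  have step1 : ∑ a : ZMod p, Lab p χ1 αz βz (a * u⁻¹) * ψ (a * tz)
      = ∑ v : ZMod p, Lab p χ1 αz βz v * ψ (u * v * tz) := by
    refine (Fintype.sum_bijective (fun v => u * v) (mulLeft_bijective₀ u hu)
      (fun v => Lab p χ1 αz βz v * ψ (u * v * tz))
      (fun a => Lab p χ1 αz βz (a * u⁻¹) * ψ (a * tz)) (fun v => ?_)).symm
    congr 2
    field_simp
  have step2 : ∀ b : ZMod p,
      (∑ v : ZMod p, (if b + βz * v ≠ 0 then χ1⁻¹ b * ψ (αz * (b + βz * v)⁻¹) else 0) * ψ (u * v * tz))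
      = (χ1⁻¹ b * ψ (-(c * b))) * W := by
    intro b
    have hbij : Function.Bijective (fun v : ZMod p => b + βz * v) :=
      (Equiv.addLeft b).bijective.comp (mulLeft_bijective₀ βz hβ)
    have e1 : ∑ v : ZMod p, (if b + βz * v ≠ 0 then χ1⁻¹ b * ψ (αz * (b + βz * v)⁻¹) else 0) * ψ (u * v * tz)
        = ∑ w : ZMod p, (if w ≠ 0 then χ1⁻¹ b * ψ (αz * w⁻¹) else 0) * ψ (c * w + -(c * b)) := by
      refine Fintype.sum_bijective _ hbij _ _ (fun v => ?_)
      congr 2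
      rw [hc]
      field_simp
      ring
    rw [e1]
    calc ∑ w : ZMod p, (if w ≠ 0 then χ1⁻¹ b * ψ (αz * w⁻¹) else 0) * ψ (c * w + -(c * b))
        = ∑ w : ZMod p, (χ1⁻¹ b * ψ (-(c * b))) * (if w ≠ 0 then ψ (αz * w⁻¹ + c * w) else 0) := by
          refine Finset.sum_congr rfl fun w _ => ?_
          by_cases hw : w = 0
          · rw [if_neg (fun h => h hw), if_neg (fun h => h hw), zero_mul, mul_zero]
          · rw [if_pos hw, if_pos hw, AddChar.map_add_eq_mul, AddChar.map_add_eq_mul]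
            ring
      _ = (χ1⁻¹ b * ψ (-(c * b))) * W := by
          rw [← Finset.mul_sum, hW, Finset.sum_filter]
  have step3 : ∑ v : ZMod p, Lab p χ1 αz βz v * ψ (u * v * tz)
      = S * ((χ1 (-1) * χ1 c * gaussSum χ1⁻¹ ψ) * W) := by
    calc ∑ v : ZMod p, Lab p χ1 αz βz v * ψ (u * v * tz)
        = ∑ v : ZMod p, ∑ b : ZMod p,
            S * ((if b + βz * v ≠ 0 then χ1⁻¹ b * ψ (αz * (b + βz * v)⁻¹) else 0) * ψ (u * v * tz)) := by
          refine Finset.sum_congr rfl fun v _ => ?_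
          rw [CFT.Lab_eq, mul_assoc, Finset.sum_mul, Finset.mul_sum]
      _ = ∑ b : ZMod p, ∑ v : ZMod p,
            S * ((if b + βz * v ≠ 0 then χ1⁻¹ b * ψ (αz * (b + βz * v)⁻¹) else 0) * ψ (u * v * tz)) :=
          Finset.sum_comm
      _ = ∑ b : ZMod p, S * ((χ1⁻¹ b * ψ (-(c * b))) * W) := by
          refine Finset.sum_congr rfl fun b _ => ?_
          rw [← Finset.mul_sum, step2 b]
      _ = S * ((∑ b : ZMod p, χ1⁻¹ b * ψ (-(c * b))) * W) := by
          rw [← Finset.mul_sum, ← Finset.sum_mul]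
      _ = S * ((χ1 (-1) * χ1 c * gaussSum χ1⁻¹ ψ) * W) := by
          rw [CFT.b_sum χ1 hχ1 c]
  rw [step1, step3]
  have := CFT.w_sum χ1 αz c hα
  calc S * ((χ1 (-1) * χ1 c * gaussSum χ1⁻¹ ψ) * W)
      = S * (χ1 (-1) * gaussSum χ1⁻¹ ψ) * (χ1 c * W) := by ring
    _ = S * (χ1 (-1) * gaussSum χ1⁻¹ ψ) * (χ1 c * (((Real.sqrt p : ℝ) : ℂ) * Kl2 p (αz * c))) := by
        rw [this]
    _ = S * (χ1 (-1) * gaussSum χ1⁻¹ ψ) * (χ1 c * ((Real.sqrt p : ℝ) : ℂ) * Kl2 p (αz * c)) := by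
        ring

end CFTaux

/-- Fourier transform of the multiplicative convolution `K ⋆ L`. -/
theorem conv_fourier_transform
    (p : ℕ) (hp : p.Prime) (χ1 : DirichletCharacter ℂ p) (hχ1 : χ1 ≠ 1)
    (α β γ : ℤ) (hαβ : ¬ ((p : ℤ) ∣ α * β)) (t : ℤ) :
    ((1 / Real.sqrt p : ℝ) : ℂ) *
      ∑ a ∈ Finset.range p,
        (((1 / Real.sqrt p : ℝ) : ℂ) *
          ∑ u ∈ (Finset.range p).filter (fun u => Nat.Coprime u p),
            Kl2 p ((γ : ZMod p) * (u : ZMod p)) *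
              Lab p χ1 (α : ZMod p) (β : ZMod p) ((a : ZMod p) * ((u : ZMod p))⁻¹)) *
          eZMod p ((a : ZMod p) * (t : ZMod p))
    = (1 / gauss p χ1) *
        ∑ u ∈ (Finset.range p).filter (fun u => Nat.Coprime u p),
          Kl2 p ((β : ZMod p) * (γ : ZMod p) * (u : ZMod p)) *
            χ1 ((u : ZMod p) * (t : ZMod p)) *
            Kl2 p ((α : ZMod p) * (u : ZMod p) * (t : ZMod p)) := by
  haveI : Fact p.Prime := ⟨hp⟩
  have hα : (α : ZMod p) ≠ 0 := by
    rw [Ne, ZMod.intCast_zmod_eq_zero_iff_dvd]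
    exact fun h => hαβ (h.mul_right β)
  have hβ : (β : ZMod p) ≠ 0 := by
    rw [Ne, ZMod.intCast_zmod_eq_zero_iff_dvd]
    exact fun h => hαβ (h.mul_left α)
  have hGG : gaussSum χ1 ZMod.stdAddChar * (χ1 (-1) * gaussSum χ1⁻¹ ZMod.stdAddChar) = (p : ℂ) := by
    have h1 : gaussSum χ1 ZMod.stdAddChar * gaussSum χ1⁻¹ (ZMod.stdAddChar)⁻¹ = (p : ℂ) := by
      rw [gaussSum_mul_gaussSum_eq_card hχ1 (ZMod.isPrimitive_stdAddChar p)]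
      simp [ZMod.card]
    have h2 : χ1 (-1) * gaussSum χ1⁻¹ (ZMod.stdAddChar)⁻¹ = gaussSum χ1⁻¹ ZMod.stdAddChar := by
      have := mul_gaussSum_inv_eq_gaussSum χ1⁻¹ (ZMod.stdAddChar (N := p))
      rwa [MulChar.inv_apply', inv_neg, inv_one] at this
    have h3 : χ1 (-1) * χ1 (-1) = 1 := by
      rw [← map_mul]; norm_num
    calc gaussSum χ1 ZMod.stdAddChar * (χ1 (-1) * gaussSum χ1⁻¹ ZMod.stdAddChar)
        = gaussSum χ1 ZMod.stdAddChar *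
            (χ1 (-1) * (χ1 (-1) * gaussSum χ1⁻¹ (ZMod.stdAddChar)⁻¹)) := by rw [h2]
      _ = gaussSum χ1 ZMod.stdAddChar *
            ((χ1 (-1) * χ1 (-1)) * gaussSum χ1⁻¹ (ZMod.stdAddChar)⁻¹) := by ring
      _ = (p : ℂ) := by rw [h3, one_mul, h1]
  have hpC : (p : ℂ) ≠ 0 := by exact_mod_cast hp.pos.ne'
  have hGne : gaussSum χ1 ZMod.stdAddChar ≠ 0 := fun h => hpC (by rw [← hGG, h, zero_mul])
  have hSS : ((1 / Real.sqrt p : ℝ) : ℂ) * ((1 / Real.sqrt p : ℝ) : ℂ) = (p : ℂ)⁻¹ := by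
    rw [← Complex.ofReal_mul,
      show (1 / Real.sqrt p) * (1 / Real.sqrt p) = 1 / (Real.sqrt p * Real.sqrt p) by ring,
      Real.mul_self_sqrt (Nat.cast_nonneg p)]
    simp
  have hSSp : ((1 / Real.sqrt p : ℝ) : ℂ) * ((Real.sqrt p : ℝ) : ℂ) = 1 := by
    rw [← Complex.ofReal_mul, one_div, inv_mul_cancel₀, Complex.ofReal_one]
    exact Real.sqrt_ne_zero'.mpr (by exact_mod_cast hp.pos)
  have hcoef : ((1 / Real.sqrt p : ℝ) : ℂ) * ((1 / Real.sqrt p : ℝ) : ℂ) *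
      (χ1 (-1) * gaussSum χ1⁻¹ ZMod.stdAddChar) = 1 / gaussSum χ1 ZMod.stdAddChar := by
    have h4 : χ1 (-1) * gaussSum χ1⁻¹ ZMod.stdAddChar
        = (p : ℂ) * (gaussSum χ1 ZMod.stdAddChar)⁻¹ := by
      have h5 : (p : ℂ) * (gaussSum χ1 ZMod.stdAddChar)⁻¹
          = (gaussSum χ1 ZMod.stdAddChar * (χ1 (-1) * gaussSum χ1⁻¹ ZMod.stdAddChar)) *
              (gaussSum χ1 ZMod.stdAddChar)⁻¹ := by rw [hGG]
      rw [h5, mul_comm (gaussSum χ1 ZMod.stdAddChar), mul_assoc,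
        mul_inv_cancel₀ hGne, mul_one]
    rw [hSS, h4, one_div, ← mul_assoc, inv_mul_cancel₀ hpC, one_mul]
  calc ((1 / Real.sqrt p : ℝ) : ℂ) *
      ∑ a ∈ Finset.range p,
        (((1 / Real.sqrt p : ℝ) : ℂ) *
          ∑ u ∈ (Finset.range p).filter (fun u => Nat.Coprime u p),
            Kl2 p ((γ : ZMod p) * (u : ZMod p)) *
              Lab p χ1 (α : ZMod p) (β : ZMod p) ((a : ZMod p) * ((u : ZMod p))⁻¹)) *
          eZMod p ((a : ZMod p) * (t : ZMod p))
      = ((1 / Real.sqrt p : ℝ) : ℂ) * ∑ a : ZMod p,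
          ∑ u ∈ univ.filter (fun x : ZMod p => x ≠ 0),
            ((1 / Real.sqrt p : ℝ) : ℂ) * (Kl2 p ((γ : ZMod p) * u) *
              (Lab p χ1 (α : ZMod p) (β : ZMod p) (a * u⁻¹) *
                ZMod.stdAddChar (a * (t : ZMod p)))) := by
        congr 1
        rw [← CFT.sum_range_eq (fun a : ZMod p =>
          ∑ u ∈ univ.filter (fun x : ZMod p => x ≠ 0),
            ((1 / Real.sqrt p : ℝ) : ℂ) * (Kl2 p ((γ : ZMod p) * u) *
              (Lab p χ1 (α : ZMod p) (β : ZMod p) (a * u⁻¹) *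
                ZMod.stdAddChar (a * (t : ZMod p)))))]
        refine Finset.sum_congr rfl fun a _ => ?_
        rw [CFT.eZMod_eq,
          CFT.sum_coprime_eq (fun u : ZMod p => Kl2 p ((γ : ZMod p) * u) *
            Lab p χ1 (α : ZMod p) (β : ZMod p) ((a : ZMod p) * u⁻¹)),
          mul_assoc, Finset.sum_mul, Finset.mul_sum]
        exact Finset.sum_congr rfl fun u _ => by ring
    _ = ((1 / Real.sqrt p : ℝ) : ℂ) * ∑ u ∈ univ.filter (fun x : ZMod p => x ≠ 0),
          ((1 / Real.sqrt p : ℝ) : ℂ) * (Kl2 p ((γ : ZMod p) * u) *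
            ∑ a : ZMod p, Lab p χ1 (α : ZMod p) (β : ZMod p) (a * u⁻¹) *
              ZMod.stdAddChar (a * (t : ZMod p))) := by
        rw [Finset.sum_comm]
        exact congrArg _ (Finset.sum_congr rfl fun u _ => by
          rw [Finset.mul_sum, Finset.mul_sum])
    _ = ((1 / Real.sqrt p : ℝ) : ℂ) * ∑ u ∈ univ.filter (fun x : ZMod p => x ≠ 0),
          (((1 / Real.sqrt p : ℝ) : ℂ) * (χ1 (-1) * gaussSum χ1⁻¹ ZMod.stdAddChar)) *
            (Kl2 p ((γ : ZMod p) * u) *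
              (χ1 (u * (t : ZMod p) * ((β : ZMod p))⁻¹) *
                Kl2 p ((α : ZMod p) * (u * (t : ZMod p) * ((β : ZMod p))⁻¹)))) := by
        congr 1
        refine Finset.sum_congr rfl fun u hu => ?_
        have hu0 : u ≠ 0 := (Finset.mem_filter.mp hu).2
        rw [CFT.key_sum χ1 hχ1 (α : ZMod p) (β : ZMod p) (t : ZMod p) u hα hβ hu0]
        calc ((1 / Real.sqrt p : ℝ) : ℂ) * (Kl2 p ((γ : ZMod p) * u) *
              (((1 / Real.sqrt p : ℝ) : ℂ) * (χ1 (-1) * gaussSum χ1⁻¹ ZMod.stdAddChar) *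
                (χ1 (u * (t : ZMod p) * ((β : ZMod p))⁻¹) * ((Real.sqrt p : ℝ) : ℂ) *
                  Kl2 p ((α : ZMod p) * (u * (t : ZMod p) * ((β : ZMod p))⁻¹)))))
            = (((1 / Real.sqrt p : ℝ) : ℂ) * ((Real.sqrt p : ℝ) : ℂ)) *
                ((((1 / Real.sqrt p : ℝ) : ℂ) * (χ1 (-1) * gaussSum χ1⁻¹ ZMod.stdAddChar)) *
                  (Kl2 p ((γ : ZMod p) * u) *
                    (χ1 (u * (t : ZMod p) * ((β : ZMod p))⁻¹) *
                      Kl2 p ((α : ZMod p) * (u * (t : ZMod p) * ((β : ZMod p))⁻¹))))) := by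
              ring
          _ = _ := by rw [hSSp, one_mul]
    _ = (((1 / Real.sqrt p : ℝ) : ℂ) * ((1 / Real.sqrt p : ℝ) : ℂ) *
          (χ1 (-1) * gaussSum χ1⁻¹ ZMod.stdAddChar)) *
          ∑ u ∈ univ.filter (fun x : ZMod p => x ≠ 0),
            Kl2 p ((γ : ZMod p) * u) *
              (χ1 (u * (t : ZMod p) * ((β : ZMod p))⁻¹) *
                Kl2 p ((α : ZMod p) * (u * (t : ZMod p) * ((β : ZMod p))⁻¹))) := by
        rw [← Finset.mul_sum, ← mul_assoc]
        ring
    _ = (1 / gaussSum χ1 ZMod.stdAddChar) *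
          ∑ u ∈ univ.filter (fun x : ZMod p => x ≠ 0),
            Kl2 p ((β : ZMod p) * (γ : ZMod p) * u) * χ1 (u * (t : ZMod p)) *
              Kl2 p ((α : ZMod p) * u * (t : ZMod p)) := by
        rw [hcoef]
        congr 1
        refine Finset.sum_nbij' (fun u => (β : ZMod p)⁻¹ * u) (fun u => (β : ZMod p) * u)
          ?_ ?_ ?_ ?_ ?_
        · intro u hu
          simp only [mem_filter, mem_univ, true_and] at hu ⊢
          exact mul_ne_zero (inv_ne_zero hβ) hu
        · intro u hu
          simp only [mem_filter, mem_univ, true_and] at hu ⊢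
          exact mul_ne_zero hβ hu
        · intro u _; field_simp
        · intro u _; field_simp
        · intro u _
          have e1 : (β : ZMod p) * (γ : ZMod p) * ((β : ZMod p)⁻¹ * u) = (γ : ZMod p) * u := by
            field_simp
          have e2 : (β : ZMod p)⁻¹ * u * (t : ZMod p) = u * (t : ZMod p) * ((β : ZMod p))⁻¹ := by
            ring
          have e3 : (α : ZMod p) * ((β : ZMod p)⁻¹ * u) * (t : ZMod p)
              = (α : ZMod p) * (u * (t : ZMod p) * ((β : ZMod p))⁻¹) := by ring
          rw [e1, e2, e3]
          ring
    _ = (1 / gauss p χ1) *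
          ∑ u ∈ (Finset.range p).filter (fun u => Nat.Coprime u p),
            Kl2 p ((β : ZMod p) * (γ : ZMod p) * (u : ZMod p)) * χ1 ((u : ZMod p) * (t : ZMod p)) *
              Kl2 p ((α : ZMod p) * (u : ZMod p) * (t : ZMod p)) := by
        rw [CFT.gauss_eq, CFT.sum_coprime_eq (fun u : ZMod p =>
          Kl2 p ((β : ZMod p) * (γ : ZMod p) * u) * χ1 (u * (t : ZMod p)) *
            Kl2 p ((α : ZMod p) * u * (t : ZMod p)))]
end
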